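/- arXiv:1604.06139 — 2 statements merged into one kernel-verified Lean document; each statement's English description precedes it below -/
import Mathlib

section
/- Let R be an LM-system and s, t terms. Then s →*_R t if and only if for every outermost distinguishing position p of s and t, s|_p →*_R t|_p. -/
/-! Basic first-order terms, positions, substitutions and rewriting. -/

inductive Term (F : Type) : Type
  | var : Nat → Term F
  | app : F → List (Term F) → Term F

namespace Term

def subst {F : Type} (σ : Nat → Term F) : Term F → Term F
  | var n => σ n
  | app f ts => app f (ts.attach.map fun ⟨t, _⟩ => t.subst σ)

def root {F : Type} : Term F → Option F
  | var _ => none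
  | app f _ => some f

def label {F : Type} : Term F → F ⊕ Nat
  | var n => Sum.inr n
  | app f _ => Sum.inl f

def IsVar {F : Type} : Term F → Prop
  | var _ => True
  | app _ _ => False

def varsL {F : Type} : Term F → List Nat
  | var n => [n]
  | app _ ts => (ts.attach.map fun ⟨t, _⟩ => t.varsL).flatten

end Term

abbrev Rule (F : Type) := Term F × Term F
abbrev TRS (F : Type) := Set (Rule F)

/-- `SubtermAt t p u` : the subterm of `t` at position `p` is `u`. -/
inductive SubtermAt {F : Type} : Term F → List Nat → Term F → Prop
  | here (t : Term F) : SubtermAt t [] t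
  | there {f : F} {ts : List (Term F)} {i : Nat} {u : Term F} {p : List Nat} {v : Term F} :
      ts[i]? = some u → SubtermAt u p v → SubtermAt (Term.app f ts) (i :: p) v

/-- `ReplaceAt t p v t'` : replacing the subterm of `t` at position `p` by `v` yields `t'`. -/
inductive ReplaceAt {F : Type} : Term F → List Nat → Term F → Term F → Prop
  | here (t u : Term F) : ReplaceAt t [] u u
  | there {f : F} {ts : List (Term F)} {i : Nat} {u : Term F} {p : List Nat} {v w : Term F} :
      ts[i]? = some u → ReplaceAt u p v w →
      ReplaceAt (Term.app f ts) (i :: p) v (Term.app f (ts.set i w))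

variable {F : Type}

/-- One rewrite step using the given rule (at some position, with some substitution). -/
def RuleStep (ρ : Rule F) (s t : Term F) : Prop :=
  ∃ (σ : Nat → Term F) (p : List Nat),
    SubtermAt s p (ρ.1.subst σ) ∧ ReplaceAt s p (ρ.2.subst σ) t

def OneStep (R : TRS F) (s t : Term F) : Prop := ∃ ρ ∈ R, RuleStep ρ s t

/-- A rewrite step at the root position. -/
def RootStep (R : TRS F) (s t : Term F) : Prop :=
  ∃ ρ ∈ R, ∃ σ : Nat → Term F, s = ρ.1.subst σ ∧ t = ρ.2.subst σ

def StarRW (R : TRS F) : Term F → Term F → Prop := Relation.ReflTransGen (OneStep R)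
def Plus (R : TRS F) : Term F → Term F → Prop := Relation.TransGen (OneStep R)
/-- Convertibility (the congruence / equational theory generated by `R`). -/
def Conv (R : TRS F) : Term F → Term F → Prop := Relation.EqvGen (OneStep R)
def Joinable (R : TRS F) (s t : Term F) : Prop := ∃ u, StarRW R s u ∧ StarRW R t u
def NormalForm (R : TRS F) (t : Term F) : Prop := ∀ u, ¬ OneStep R t u
/-- `t` is the `R`-normal form of `s`. -/
def NFof (R : TRS F) (s t : Term F) : Prop := StarRW R s t ∧ NormalForm R t
def Terminating (R : TRS F) : Prop := WellFounded (fun a b : Term F => OneStep R b a)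
def Confluent (R : TRS F) : Prop := ∀ s t u, StarRW R s t → StarRW R s u → Joinable R t u
def Convergent (R : TRS F) : Prop := Confluent R ∧ Terminating R

/-- every proper subterm is irreducible -/
def EpsIrreducible (R : TRS F) (t : Term F) : Prop :=
  ∀ p u, SubtermAt t p u → p ≠ [] → NormalForm R u

def InnermostRedex (R : TRS F) (t : Term F) : Prop :=
  EpsIrreducible R t ∧ ¬ NormalForm R t

/-- Forward-closed, via the one-step-to-normal-form characterization. -/
def FCclosed (R : TRS F) : Prop :=
  ∀ t, InnermostRedex R t → ∀ u, NFof R t u → OneStep R t u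

def Unifies (σ : Nat → Term F) (s t : Term F) : Prop := s.subst σ = t.subst σ

def IsMGU (σ : Nat → Term F) (s t : Term F) : Prop :=
  Unifies σ s t ∧ ∀ τ, Unifies τ s t → ∃ δ, ∀ x, τ x = (σ x).subst δ

def IsRenaming (ρ : Nat → Term F) : Prop :=
  ∃ f : Nat → Nat, Function.Injective f ∧ ∀ n, ρ n = Term.var (f n)

/-- Redundancy criterion for an oriented equation `e` whose right-hand side is
reachable from its left-hand side: some proper subterm of the lhs is reducible. -/
def Redundant (R : TRS F) (e : Rule F) : Prop :=
  ∃ p u, p ≠ ([] : List Nat) ∧ SubtermAt e.1 p u ∧ ¬ NormalForm R u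

/-- `R₁ ↝ R₂`: forward overlaps of rules of `R₂` (renamed apart) into
right-hand sides of rules of `R₁`, at non-variable positions, via an mgu. -/
def FStep (R₁ R₂ : TRS F) : TRS F :=
  { e | ∃ (l₁ r₁ l₂ r₂ : Term F) (ρ : Nat → Term F) (p : List Nat) (u : Term F)
          (σ : Nat → Term F) (r₁' : Term F),
      (l₁, r₁) ∈ R₁ ∧ (l₂, r₂) ∈ R₂ ∧ IsRenaming ρ ∧
      SubtermAt r₁ p u ∧ ¬ u.IsVar ∧ IsMGU σ u (l₂.subst ρ) ∧
      ReplaceAt r₁ p (r₂.subst ρ) r₁' ∧ e = (l₁.subst σ, r₁'.subst σ) }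

def FCiter (R : TRS F) : Nat → TRS F
  | 0 => R
  | k + 1 => FCiter R k ∪ { e | e ∈ FStep (FCiter R k) R ∧ ¬ Redundant (FCiter R k) e }

def FCinf (R : TRS F) : TRS F := ⋃ k, FCiter R k

/-- Forward-closed, via the forward-closure construction: `FC(R) = R`. -/
def ForwardClosedFC (R : TRS F) : Prop := FCinf R = R

/-- `RHS(R)`: `R` together with the conclusions of right-hand-side critical
pair inferences (second rule renamed apart). -/
def RHSset (R : TRS F) : TRS F :=
  R ∪ { e | ∃ (s t u₀ v₀ : Term F) (ρ σ : Nat → Term F), (s, t) ∈ R ∧ (u₀, v₀) ∈ R ∧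
        IsRenaming ρ ∧ IsMGU σ t (v₀.subst ρ) ∧
        s.subst σ ≠ (u₀.subst ρ).subst σ ∧ e = (s.subst σ, (u₀.subst ρ).subst σ) }

/-- the (unordered) pairs of root symbols of two equations coincide -/
def RootPairSimilar (e₁ e₂ : Rule F) : Prop :=
  (e₁.1.root = e₂.1.root ∧ e₁.2.root = e₂.2.root) ∨
  (e₁.1.root = e₂.2.root ∧ e₁.2.root = e₂.1.root)

def QuasiDet (E : TRS F) : Prop :=
  (∀ e ∈ E, ¬ e.1.IsVar ∧ ¬ e.2.IsVar) ∧
  (∀ e ∈ E, e.1.root ≠ e.2.root) ∧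
  (∀ e₁ ∈ E, ∀ e₂ ∈ E, e₁ ≠ e₂ → ¬ RootPairSimilar e₁ e₂)

def HasRootPairRepetition (E : TRS F) : Prop :=
  ∃ e₁ ∈ E, ∃ e₂ ∈ E, e₁ ≠ e₂ ∧ RootPairSimilar e₁ e₂

def VarPreserving (R : TRS F) : Prop :=
  ∀ e ∈ R, ∀ n, n ∈ Term.varsL e.1 ↔ n ∈ Term.varsL e.2

def RightReduced (R : TRS F) : Prop := ∀ e ∈ R, NormalForm R e.2

def AlmostLeftReduced (R : TRS F) : Prop :=
  ¬ ∃ (l₁ r₁ l₂ r₂ : Term F) (p : List Nat) (u : Term F) (σ : Nat → Term F),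
      (l₁, r₁) ∈ R ∧ (l₂, r₂) ∈ R ∧ p ≠ [] ∧ SubtermAt l₁ p u ∧ u = l₂.subst σ

def NonSubtermCollapsing (R : TRS F) : Prop :=
  ¬ ∃ (t u : Term F) (p : List Nat), p ≠ [] ∧ SubtermAt u p t ∧ Conv R t u

structure LMSystem (R : TRS F) : Prop where
  convergent : Convergent R
  almostLeftReduced : AlmostLeftReduced R
  rightReduced : RightReduced R
  nonCollapsing : NonSubtermCollapsing R
  forwardClosed : FCclosed R
  quasiDet : QuasiDet (RHSset R)

/-- the symbol (function symbol or variable) of a term at a position, if defined -/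
def labelAt {F : Type} : List Nat → Term F → Option (F ⊕ Nat)
  | [], t => some t.label
  | i :: p, Term.app _ ts => (ts[i]?).bind (labelAt p)
  | _ :: _, Term.var _ => none

/-- outermost distinguishing position -/
def ODP (s t : Term F) (p : List Nat) : Prop :=
  (labelAt p s ≠ none ∨ labelAt p t ≠ none) ∧
  labelAt p s ≠ labelAt p t ∧
  ∀ q, q <+: p → q ≠ p → labelAt q s = labelAt q t



section Aux

variable {F : Type}

open Term

/-- Inversion: subterm at the empty position. -/
theorem subtermAt_nil {s u : Term F} (h : SubtermAt s [] u) : u = s := by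
  cases h; rfl

/-- Inversion: subterm at a cons position. -/
theorem subtermAt_cons {f : F} {ss : List (Term F)} {i : Nat} {p : List Nat} {u : Term F}
    (h : SubtermAt (Term.app f ss) (i :: p) u) :
    ∃ w, ss[i]? = some w ∧ SubtermAt w p u := by
  cases h with
  | there hget hsub => exact ⟨_, hget, hsub⟩

theorem labelAt_nil (s : Term F) : labelAt [] s = some s.label := rfl

theorem labelAt_cons (f : F) (ss : List (Term F)) (i : Nat) (p : List Nat) :
    labelAt (i :: p) (Term.app f ss) = (ss[i]?).bind (labelAt p) := rfl

/-- list helper: get? after set at same index -/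
theorem get?_set_self {α : Type _} : ∀ (l : List α) (i : Nat) (a b : α),
    l[i]? = some a → (l.set i b)[i]? = some b := by
  intro l
  induction l with
  | nil => intro i a b h; simp at h
  | cons x xs ih =>
    intro i a b h
    cases i with
    | zero => simp [List.set]
    | succ j => simpa [List.set] using ih j a b (by simpa using h)

theorem set_of_get? {α : Type _} : ∀ (l : List α) (i : Nat) (a : α),
    l[i]? = some a → l.set i a = l := by
  intro l
  induction l with
  | nil => intro i a h; simp at h
  | cons x xs ih =>
    intro i a h
    cases i with
    | zero => simp at h; simp [List.set, h]
    | succ j => simp [List.set]; exact ih j a (by simpa using h)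

theorem set_set' {α : Type _} : ∀ (l : List α) (i : Nat) (a b : α),
    (l.set i a).set i b = l.set i b := by
  intro l
  induction l with
  | nil => intro i a b; simp
  | cons x xs ih =>
    intro i a b
    cases i with
    | zero => simp [List.set]
    | succ j => simp [List.set]

theorem get?_append_length {α : Type _} : ∀ (pre : List α) (a : α) (l : List α),
    (pre ++ a :: l)[pre.length]? = some a := by
  intro pre
  induction pre with
  | nil => intro a l; rfl
  | cons x xs ih => intro a l; simpa using ih a l

theorem set_append_length {α : Type _} : ∀ (pre : List α) (a b : α) (l : List α),
    (pre ++ a :: l).set pre.length b = pre ++ b :: l := by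
  intro pre
  induction pre with
  | nil => intro a b l; rfl
  | cons x xs ih => intro a b l; simp [List.set]; try exact ih a b l

/-- One rewrite step inside the `i`-th argument. -/
theorem oneStep_congr {R : TRS F} {u v : Term F} (h : OneStep R u v)
    (f : F) (ss : List (Term F)) (i : Nat) (hget : ss[i]? = some u) :
    OneStep R (Term.app f ss) (Term.app f (ss.set i v)) := by
  obtain ⟨ρ, hρ, σ, p, hsub, hrep⟩ := h
  exact ⟨ρ, hρ, σ, i :: p, SubtermAt.there hget hsub, ReplaceAt.there hget hrep⟩

/-- Many rewrite steps inside the `i`-th argument. -/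
theorem starRW_congr {R : TRS F} {u v : Term F} (h : StarRW R u v)
    (f : F) (ss : List (Term F)) (i : Nat) (hget : ss[i]? = some u) :
    StarRW R (Term.app f ss) (Term.app f (ss.set i v)) := by
  induction h with
  | refl => rw [set_of_get? ss i u hget]; exact Relation.ReflTransGen.refl
  | tail _hab hbc ih =>
    rename_i b c
    have hb : (ss.set i b)[i]? = some b := get?_set_self ss i u b hget
    have step := oneStep_congr hbc f (ss.set i b) i hb
    rw [set_set'] at step
    exact Relation.ReflTransGen.tail ih step

/-- Congruence: rewriting all arguments. -/
theorem starRW_congr_args {R : TRS F} (f : F) :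
    ∀ (ss tt pre : List (Term F)), ss.length = tt.length →
      (∀ (i : Nat) u v, ss[i]? = some u → tt[i]? = some v → StarRW R u v) →
      StarRW R (Term.app f (pre ++ ss)) (Term.app f (pre ++ tt)) := by
  intro ss
  induction ss with
  | nil =>
    intro tt pre hlen _h
    cases tt with
    | nil => exact Relation.ReflTransGen.refl
    | cons b tt' => simp at hlen
  | cons a ss' ih =>
    intro tt pre hlen H
    cases tt with
    | nil => simp at hlen
    | cons b tt' =>
      have h0 : StarRW R a b := H 0 a b rfl rfl
      have step1 : StarRW R (Term.app f (pre ++ a :: ss')) (Term.app f (pre ++ b :: ss')) := by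
        have := starRW_congr h0 f (pre ++ a :: ss') pre.length (get?_append_length pre a ss')
        rwa [set_append_length] at this
      have step2 : StarRW R (Term.app f ((pre ++ [b]) ++ ss')) (Term.app f ((pre ++ [b]) ++ tt')) := by
        apply ih tt' (pre ++ [b]) (by simpa using hlen)
        intro i u v hu hv
        exact H (i + 1) u v (by simpa using hu) (by simpa using hv)
      have e1 : (pre ++ [b]) ++ ss' = pre ++ b :: ss' := by simp
      have e2 : (pre ++ [b]) ++ tt' = pre ++ b :: tt' := by simp
      rw [e1, e2] at step2
      exact Relation.ReflTransGen.trans step1 step2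

/-- ODP at the root, when the root labels differ. -/
theorem odp_root {s t : Term F} (hne : s.label ≠ t.label) : ODP s t [] := by
  refine ⟨Or.inl (by simp [labelAt_nil]), ?_, ?_⟩
  · simp only [labelAt_nil]
    intro hcontra
    exact hne (Option.some.inj hcontra)
  · intro q hq hne'
    exact absurd (List.prefix_nil.mp hq) hne'

/-- Lifting an ODP of arguments to an ODP of applications with the same head. -/
theorem odp_lift {f : F} {ss tt : List (Term F)} {i : Nat} {u v : Term F} {p : List Nat}
    (hu : ss[i]? = some u) (hv : tt[i]? = some v) (h : ODP u v p) :
    ODP (Term.app f ss) (Term.app f tt) (i :: p) := by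
  obtain ⟨h1, h2, h3⟩ := h
  refine ⟨?_, ?_, ?_⟩
  · rcases h1 with h1 | h1
    · exact Or.inl (by rw [labelAt_cons, hu]; exact h1)
    · exact Or.inr (by rw [labelAt_cons, hv]; exact h1)
  · rw [labelAt_cons, labelAt_cons, hu, hv]
    exact h2
  · intro q hq hne
    cases q with
    | nil => rfl
    | cons j q' =>
      obtain ⟨rr, hrr⟩ := hq
      have hj : j = i ∧ q' ++ rr = p := by
        constructor
        · exact (List.cons.injEq _ _ _ _ ▸ hrr : _ ∧ _).1
        · exact (List.cons.injEq _ _ _ _ ▸ hrr : _ ∧ _).2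
      obtain ⟨hj1, hj2⟩ := hj
      subst hj1
      have hq' : q' <+: p := ⟨rr, hj2⟩
      have hne' : q' ≠ p := by
        intro hEq
        exact hne (by rw [hEq])
      rw [labelAt_cons, labelAt_cons, hu, hv]
      exact h3 q' hq' hne'

theorem get?_exists_of_lt {α : Type _} : ∀ (l : List α) (i : Nat), i < l.length →
    ∃ a, l[i]? = some a := by
  intro l
  induction l with
  | nil => intro i h; simp at h
  | cons x xs ih =>
    intro i h
    cases i with
    | zero => exact ⟨x, rfl⟩
    | succ j => exact ih j (by simpa using h)

theorem get?_none_of_le {α : Type _} : ∀ (l : List α) (i : Nat), l.length ≤ i →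
    l[i]? = none := by
  intro l
  induction l with
  | nil => intro i _; rfl
  | cons x xs ih =>
    intro i h
    cases i with
    | zero => simp at h
    | succ j => exact ih j (by simpa using h)

/-- When the two argument lists have different lengths, the ODP hypothesis is absurd. -/
theorem length_ne_absurd {R : TRS F} {f : F} {ss tt : List (Term F)}
    (h : ∀ p, ODP (Term.app f ss) (Term.app f tt) p →
      ∃ u v, SubtermAt (Term.app f ss) p u ∧ SubtermAt (Term.app f tt) p v ∧ StarRW R u v)
    (hlt : ss.length < tt.length) : False := by
  obtain ⟨w, hw⟩ := get?_exists_of_lt tt ss.length hlt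
  have hodp : ODP (Term.app f ss) (Term.app f tt) [ss.length] := by
    refine ⟨?_, ?_, ?_⟩
    · refine Or.inr ?_
      rw [labelAt_cons, hw]
      simp [labelAt_nil]
    · rw [labelAt_cons, labelAt_cons, hw, get?_none_of_le ss ss.length (le_refl _)]
      simp [labelAt_nil]
    · intro q hq hne
      cases q with
      | nil => rfl
      | cons j q' =>
        obtain ⟨rr, hrr⟩ := hq
        have : j = ss.length ∧ q' ++ rr = [] := by
          constructor
          · exact (List.cons.injEq _ _ _ _ ▸ hrr : _ ∧ _).1
          · exact (List.cons.injEq _ _ _ _ ▸ hrr : _ ∧ _).2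
        obtain ⟨hj, hq'⟩ := this
        have : q' = [] := by
          cases q' with
          | nil => rfl
          | cons _ _ => simp at hq'
        subst hj; subst this
        exact absurd rfl hne
  obtain ⟨u, v, hsu, _, _⟩ := h [ss.length] hodp
  obtain ⟨w', hw', _⟩ := subtermAt_cons hsu
  rw [get?_none_of_le ss ss.length (le_refl _)] at hw'
  exact nomatch hw'

/-- The backward direction: the ODP condition implies reachability.
This direction is purely structural (it does not use the LM assumptions). -/
theorem odp_backward {R : TRS F} : ∀ (N : Nat) (s t : Term F), sizeOf s < N →
    (∀ p, ODP s t p → ∃ u v, SubtermAt s p u ∧ SubtermAt t p v ∧ StarRW R u v) →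
    StarRW R s t := by
  intro N
  induction N with
  | zero => intro s t hsz; omega
  | succ N ih =>
    intro s t hsz h
    by_cases hl : s.label = t.label
    · -- same root labels
      cases s with
      | var n =>
        cases t with
        | var m =>
          have : n = m := by simpa [Term.label] using hl
          subst this
          exact Relation.ReflTransGen.refl
        | app g tt => simp [Term.label] at hl
      | app f ss =>
        cases t with
        | var m => simp [Term.label] at hl
        | app g tt =>
          have hfg : f = g := by simpa [Term.label] using hl
          subst hfg
          rcases Nat.lt_trichotomy ss.length tt.length with hlen | hlen | hlen
          · exact absurd (length_ne_absurd h hlen) (fun hF => hF)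
          · -- equal lengths: componentwise
            have hcomp : ∀ (i : Nat) u v, ss[i]? = some u → tt[i]? = some v → StarRW R u v := by
              intro i u v hu hv
              have husz : sizeOf u < N := by
                have h1 : u ∈ ss := List.mem_of_getElem? hu
                have h2 : sizeOf u < sizeOf ss := List.sizeOf_lt_of_mem h1
                have h3 : sizeOf (Term.app f ss) = 1 + sizeOf f + sizeOf ss := by
                  simp [Term.app.sizeOf_spec]
                omega
              apply ih u v husz
              intro p' hodp
              obtain ⟨U, V, hU, hV, hUV⟩ := h (i :: p') (odp_lift hu hv hodp)
              obtain ⟨w1, hw1, hsubU⟩ := subtermAt_cons hU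
              obtain ⟨w2, hw2, hsubV⟩ := subtermAt_cons hV
              rw [hu] at hw1; rw [hv] at hw2
              have e1 : w1 = u := (Option.some.inj hw1).symm
              have e2 : w2 = v := (Option.some.inj hw2).symm
              subst e1; subst e2
              exact ⟨U, V, hsubU, hsubV, hUV⟩
            have := starRW_congr_args f ss tt [] hlen hcomp
            simpa using this
          · -- tt shorter: symmetric absurdity
            exfalso
            obtain ⟨w, hw⟩ := get?_exists_of_lt ss tt.length hlen
            have hodp : ODP (Term.app f ss) (Term.app f tt) [tt.length] := by
              refine ⟨?_, ?_, ?_⟩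
              · refine Or.inl ?_
                rw [labelAt_cons, hw]
                simp [labelAt_nil]
              · rw [labelAt_cons, labelAt_cons, hw, get?_none_of_le tt tt.length (le_refl _)]
                simp [labelAt_nil]
              · intro q hq hne
                cases q with
                | nil => rfl
                | cons j q' =>
                  obtain ⟨rr, hrr⟩ := hq
                  have : j = tt.length ∧ q' ++ rr = [] := by
                    constructor
                    · exact (List.cons.injEq _ _ _ _ ▸ hrr : _ ∧ _).1
                    · exact (List.cons.injEq _ _ _ _ ▸ hrr : _ ∧ _).2
                  obtain ⟨hj, hq'⟩ := this
                  have : q' = [] := by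
                    cases q' with
                    | nil => rfl
                    | cons _ _ => simp at hq'
                  subst hj; subst this
                  exact absurd rfl hne
            obtain ⟨u, v, _, htv, _⟩ := h [tt.length] hodp
            obtain ⟨w', hw', _⟩ := subtermAt_cons htv
            rw [get?_none_of_le tt tt.length (le_refl _)] at hw'
            exact nomatch hw'
    · -- different root labels: the root is an ODP
      obtain ⟨u, v, hsu, htv, huv⟩ := h [] (odp_root hl)
      rw [subtermAt_nil hsu, subtermAt_nil htv] at huv
      exact huv

end Aux


/-! ### Term toolkit -/

theorem subst_app (σ : Nat → Term F) (f : F) (ts : List (Term F)) :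
    (Term.app f ts).subst σ = Term.app f (ts.map (·.subst σ)) := by
  simp [Term.subst]

theorem subst_var' (σ : Nat → Term F) (n : Nat) : (Term.var n : Term F).subst σ = σ n := by
  simp [Term.subst]

theorem varsL_app (f : F) (ts : List (Term F)) :
    (Term.app f ts).varsL = (ts.map Term.varsL).flatten := by
  simp [Term.varsL]

/-- size-based structural induction for `Term` -/
theorem term_ind {P : Term F → Prop} (hv : ∀ n, P (Term.var n))
    (ha : ∀ f ts, (∀ t ∈ ts, P t) → P (Term.app f ts)) : ∀ t, P t := by
  have key : ∀ (N : Nat) (t : Term F), sizeOf t < N → P t := by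
    intro N
    induction N with
    | zero => intro t h; omega
    | succ N ih =>
      intro t ht
      cases t with
      | var n => exact hv n
      | app f ts =>
        refine ha f ts (fun u hu => ih u ?_)
        have h1 : sizeOf u < sizeOf ts := List.sizeOf_lt_of_mem hu
        have h2 : sizeOf (Term.app f ts) = 1 + sizeOf f + sizeOf ts := by simp
        omega
  exact fun t => key (sizeOf t + 1) t (Nat.lt_succ_self _)

theorem subst_ext : ∀ (t : Term F) (α β : Nat → Term F),
    (∀ x ∈ t.varsL, α x = β x) → t.subst α = t.subst β := by
  intro t
  induction t using term_ind with
  | hv n => intro α β h; simp only [subst_var']; exact h n (by simp [Term.varsL])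
  | ha f ts ih =>
    intro α β h
    rw [subst_app, subst_app]
    congr 1
    apply List.map_congr_left
    intro u hu
    refine ih u hu α β (fun x hx => h x ?_)
    rw [varsL_app]
    simp only [List.mem_flatten, List.mem_map]
    exact ⟨u.varsL, ⟨u, hu, rfl⟩, hx⟩

theorem subst_subst : ∀ (t : Term F) (α β : Nat → Term F),
    (t.subst α).subst β = t.subst (fun x => (α x).subst β) := by
  intro t
  induction t using term_ind with
  | hv n => intro α β; rw [subst_var', subst_var']
  | ha f ts ih =>
    intro α β
    rw [subst_app, subst_app, subst_app, List.map_map]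
    congr 1
    apply List.map_congr_left
    intro u hu
    exact ih u hu α β

theorem subst_var_id : ∀ (t : Term F), t.subst Term.var = t := by
  intro t
  induction t using term_ind with
  | hv n => exact subst_var' _ _
  | ha f ts ih =>
    rw [subst_app]
    congr 1
    have : ts.map (·.subst Term.var) = ts.map id := List.map_congr_left (fun u hu => ih u hu)
    simpa using this

theorem mem_varsL_subst : ∀ (t : Term F) (σ : Nat → Term F) (x : Nat),
    x ∈ (t.subst σ).varsL ↔ ∃ y ∈ t.varsL, x ∈ (σ y).varsL := by
  intro t
  induction t using term_ind with
  | hv n => intro σ x; simp [subst_var', Term.varsL]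
  | ha f ts ih =>
    intro σ x
    rw [subst_app, varsL_app, varsL_app]
    constructor
    · intro hx
      rw [List.mem_flatten] at hx
      obtain ⟨L, hL, hx⟩ := hx
      rw [List.mem_map] at hL
      obtain ⟨w, hw, rfl⟩ := hL
      rw [List.mem_map] at hw
      obtain ⟨u, hu, rfl⟩ := hw
      obtain ⟨y, hy, hxy⟩ := (ih u hu σ x).mp hx
      refine ⟨y, ?_, hxy⟩
      rw [List.mem_flatten]
      exact ⟨u.varsL, List.mem_map.mpr ⟨u, hu, rfl⟩, hy⟩
    · rintro ⟨y, hy, hxy⟩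
      rw [List.mem_flatten] at hy
      obtain ⟨L, hL, hy⟩ := hy
      rw [List.mem_map] at hL
      obtain ⟨u, hu, rfl⟩ := hL
      rw [List.mem_flatten]
      refine ⟨(u.subst σ).varsL, ?_, (ih u hu σ x).mpr ⟨y, hy, hxy⟩⟩
      rw [List.map_map, List.mem_map]
      exact ⟨u, hu, rfl⟩

/-- custom size function with good `subst` behaviour -/
def tsize : Term F → Nat
  | Term.var _ => 1
  | Term.app _ ts => 1 + (ts.attach.map fun ⟨t, _⟩ => tsize t).sum

theorem tsize_app (f : F) (ts : List (Term F)) :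
    tsize (Term.app f ts) = 1 + (ts.map tsize).sum := by
  simp [tsize]

theorem tsize_pos : ∀ (t : Term F), 0 < tsize t := by
  intro t
  cases t with
  | var n => simp [tsize]
  | app f ts => rw [tsize_app]; omega

theorem tsize_subst_le : ∀ (t : Term F) (σ : Nat → Term F) (x : Nat), x ∈ t.varsL →
    (t = Term.var x ∧ tsize (σ x) = tsize (t.subst σ)) ∨ tsize (σ x) < tsize (t.subst σ) := by
  intro t
  induction t using term_ind with
  | hv n =>
    intro σ x hx
    simp [Term.varsL] at hx
    subst hx
    exact Or.inl ⟨rfl, by rw [subst_var']⟩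
  | ha f ts ih =>
    intro σ x hx
    rw [varsL_app] at hx
    simp only [List.mem_flatten, List.mem_map] at hx
    obtain ⟨L, ⟨u, hu, rfl⟩, hx⟩ := hx
    right
    have hle : tsize (σ x) ≤ tsize (u.subst σ) := by
      rcases ih u hu σ x hx with ⟨_, h⟩ | h
      · omega
      · omega
    have hmem : tsize (u.subst σ) ∈ ((ts.map (·.subst σ)).map tsize) := by
      simp only [List.map_map, List.mem_map]
      exact ⟨u, hu, rfl⟩
    have hsum : tsize (u.subst σ) ≤ ((ts.map (·.subst σ)).map tsize).sum :=
      List.le_sum_of_mem hmem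
    rw [subst_app, tsize_app]
    omega

theorem subst_root (f : F) (ts : List (Term F)) (σ : Nat → Term F) :
    ((Term.app f ts).subst σ).root = some f := by
  rw [subst_app]; rfl

theorem subst_label (f : F) (ts : List (Term F)) (σ : Nat → Term F) :
    ((Term.app f ts).subst σ).label = Sum.inl f := by
  rw [subst_app]; rfl


/-! ### Rewriting toolkit -/

/-- a non-root rewrite step -/
def NRStep (R : TRS F) (s t : Term F) : Prop :=
  ∃ f ss i u v, s = Term.app f ss ∧ ss[i]? = some u ∧ OneStep R u v ∧
    t = Term.app f (ss.set i v)

def NRstar (R : TRS F) : Term F → Term F → Prop := Relation.ReflTransGen (NRStep R)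

theorem get?_set_ne {α : Type _} : ∀ (l : List α) (i j : Nat) (b : α), i ≠ j →
    (l.set i b)[j]? = l[j]? := by
  intro l
  induction l with
  | nil => intro i j b _; simp
  | cons x xs ih =>
    intro i j b hij
    cases i with
    | zero =>
      cases j with
      | zero => exact absurd rfl hij
      | succ j' => simp [List.set]
    | succ i' =>
      cases j with
      | zero => simp [List.set]
      | succ j' => simp only [List.set]; simpa using ih i' j' b (by omega)

theorem replaceAt_nil {t v t' : Term F} (h : ReplaceAt t [] v t') : t' = v := by
  cases h; rfl

theorem replaceAt_cons {f : F} {ss : List (Term F)} {i : Nat} {p : List Nat} {v t' : Term F}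
    (h : ReplaceAt (Term.app f ss) (i :: p) v t') :
    ∃ u w, ss[i]? = some u ∧ ReplaceAt u p v w ∧ t' = Term.app f (ss.set i w) := by
  cases h with
  | there hget hrep => exact ⟨_, _, hget, hrep, rfl⟩

theorem nrStep_oneStep {R : TRS F} {s t : Term F} (h : NRStep R s t) : OneStep R s t := by
  obtain ⟨f, ss, i, u, v, rfl, hget, hstep, rfl⟩ := h
  exact oneStep_congr hstep f ss i hget

theorem nrstar_star {R : TRS F} {s t : Term F} (h : NRstar R s t) : StarRW R s t :=
  by
    induction h with
    | refl => exact Relation.ReflTransGen.refl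
    | tail _ hbc ih => exact Relation.ReflTransGen.tail ih (nrStep_oneStep hbc)

theorem rootStep_oneStep {R : TRS F} {s t : Term F} (h : RootStep R s t) : OneStep R s t := by
  obtain ⟨ρ, hρ, σ, hs, ht⟩ := h
  refine ⟨ρ, hρ, σ, [], ?_, ?_⟩
  · rw [hs]; exact SubtermAt.here _
  · rw [ht]; exact ReplaceAt.here _ _

theorem oneStep_cases {R : TRS F} {s t : Term F} (h : OneStep R s t) :
    RootStep R s t ∨ NRStep R s t := by
  obtain ⟨ρ, hρ, σ, p, hsub, hrep⟩ := h
  cases p with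
  | nil =>
    left
    exact ⟨ρ, hρ, σ, (subtermAt_nil hsub).symm, replaceAt_nil hrep⟩
  | cons i p' =>
    right
    cases hsub with
    | there hget hsub' =>
      rename_i f ts u
      obtain ⟨u₂, w, hget₂, hrep₂, rfl⟩ := replaceAt_cons hrep
      rw [hget] at hget₂
      have : u₂ = u := (Option.some.inj hget₂).symm
      subst this
      exact ⟨f, ts, i, u₂, w, rfl, hget, ⟨ρ, hρ, σ, p', hsub', hrep₂⟩, rfl⟩

theorem nrStep_label {R : TRS F} {s t : Term F} (h : NRStep R s t) : s.label = t.label := by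
  obtain ⟨f, ss, i, u, v, rfl, _, _, rfl⟩ := h
  rfl

theorem nrstar_label {R : TRS F} {s t : Term F} (h : NRstar R s t) : s.label = t.label := by
  induction h with
  | refl => rfl
  | tail _ h2 ih => exact ih.trans (nrStep_label h2)

/-- decompose a rewrite sequence at the first root step -/
theorem star_dec {R : TRS F} {s t : Term F} (h : StarRW R s t) :
    NRstar R s t ∨ ∃ m m', NRstar R s m ∧ RootStep R m m' ∧ StarRW R m' t := by
  induction h using Relation.ReflTransGen.head_induction_on with
  | refl => exact Or.inl Relation.ReflTransGen.refl
  | head hstep hrest ih =>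
    rename_i s₀ s₁
    rcases oneStep_cases hstep with hroot | hnr
    · exact Or.inr ⟨s₀, s₁, Relation.ReflTransGen.refl, hroot, hrest⟩
    · rcases ih with h1 | ⟨m, m', h1, h2, h3⟩
      · exact Or.inl (Relation.ReflTransGen.head hnr h1)
      · exact Or.inr ⟨m, m', Relation.ReflTransGen.head hnr h1, h2, h3⟩

/-- projection of non-root rewriting to the arguments -/
theorem nrstar_proj {R : TRS F} {s t : Term F} (h : NRstar R s t) :
    ∀ f ss, s = Term.app f ss →
      ∃ tt, t = Term.app f tt ∧ ss.length = tt.length ∧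
        ∀ (i : Nat) u v, ss[i]? = some u → tt[i]? = some v → StarRW R u v := by
  induction h with
  | refl =>
    intro f ss hs
    subst hs
    refine ⟨ss, rfl, rfl, fun i u v hu hv => ?_⟩
    rw [hu] at hv
    exact (Option.some.inj hv) ▸ Relation.ReflTransGen.refl
  | tail _ h2 ih =>
    intro f ss hs
    obtain ⟨tt, rfl, hlen, hcw⟩ := ih f ss hs
    obtain ⟨f', ss', j, u₀, v₀, heq, hget, hstep, rfl⟩ := h2
    have hf : f' = f ∧ ss' = tt := by
      constructor
      · exact ((Term.app.injEq _ _ _ _).mp heq.symm).1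
      · exact ((Term.app.injEq _ _ _ _).mp heq.symm).2
    obtain ⟨rfl, rfl⟩ := hf
    refine ⟨ss'.set j v₀, rfl, by rw [hlen]; simp, fun i u v hu hv => ?_⟩
    by_cases hij : j = i
    · subst hij
      have h1 : ss'[j]? = some u₀ := hget
      have h2' : (ss'.set j v₀)[j]? = some v₀ := get?_set_self _ _ _ _ hget
      rw [h2'] at hv
      have : v = v₀ := (Option.some.inj hv).symm
      subst this
      exact Relation.ReflTransGen.tail (hcw j u u₀ hu h1) hstep
    · rw [get?_set_ne _ _ _ _ hij] at hv
      exact hcw i u v hu hv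

theorem star_of_nf {R : TRS F} {n t : Term F} (hn : NormalForm R n) (h : StarRW R n t) :
    t = n := by
  induction h using Relation.ReflTransGen.head_induction_on with
  | refl => rfl
  | head hstep _ _ => exact absurd hstep (hn _)

theorem nf_exists {R : TRS F} (hterm : Terminating R) (t : Term F) : ∃ n, NFof R t n := by
  induction t using hterm.induction with
  | _ t ih =>
    by_cases h : NormalForm R t
    · exact ⟨t, Relation.ReflTransGen.refl, h⟩
    · simp only [NormalForm, not_forall, not_not] at h
      obtain ⟨u, hu⟩ := h
      obtain ⟨n, hn1, hn2⟩ := ih u hu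
      exact ⟨n, Relation.ReflTransGen.head hu hn1, hn2⟩

open Classical in
noncomputable def nf (R : TRS F) (t : Term F) : Term F :=
  if h : ∃ n, NFof R t n then h.choose else t

theorem nf_spec {R : TRS F} (hterm : Terminating R) (t : Term F) : NFof R t (nf R t) := by
  rw [nf, dif_pos (nf_exists hterm t)]
  exact (nf_exists hterm t).choose_spec

/-- all reduction sequences end in the normal form -/
theorem star_to_nf {R : TRS F} (hconf : Confluent R) {s n t : Term F}
    (hn : NFof R s n) (h : StarRW R s t) : StarRW R t n := by
  obtain ⟨z, hz1, hz2⟩ := hconf s n t hn.1 h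
  rw [star_of_nf hn.2 hz1] at hz2
  exact hz2

theorem nf_unique {R : TRS F} (hconf : Confluent R) {s n₁ n₂ : Term F}
    (h1 : NFof R s n₁) (h2 : NFof R s n₂) : n₁ = n₂ :=
  star_of_nf h2.2 (star_to_nf hconf h1 h2.1) ▸ rfl

theorem normalForm_subterm {R : TRS F} : ∀ {t : Term F} {p : List Nat} {u : Term F},
    SubtermAt t p u → NormalForm R t → NormalForm R u := by
  intro t p u h
  induction h with
  | here => exact id
  | there hget _ ih =>
    intro hNF
    refine ih (fun w hw => ?_)
    exact hNF _ (oneStep_congr hw _ _ _ hget)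

theorem subtermAt_trans : ∀ {t : Term F} {p : List Nat} {u : Term F} {q v},
    SubtermAt t p u → SubtermAt u q v → SubtermAt t (p ++ q) v := by
  intro t p u q v h
  induction h with
  | here => exact id
  | there hget _ ih => exact fun h2 => SubtermAt.there hget (ih h2)

/-- rewriting inside the substitution -/
theorem substRW (R : TRS F) : ∀ (t : Term F) (α β : Nat → Term F),
    (∀ x ∈ t.varsL, StarRW R (α x) (β x)) → StarRW R (t.subst α) (t.subst β) := by
  intro t
  induction t using term_ind with
  | hv n => intro α β h; rw [subst_var', subst_var']; exact h n (by simp [Term.varsL])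
  | ha f ts ih =>
    intro α β h
    rw [subst_app, subst_app]
    have := starRW_congr_args (R := R) f (ts.map (·.subst α)) (ts.map (·.subst β)) []
      (by simp) ?_
    · simpa using this
    · intro i u v hu hv
      rw [List.getElem?_map] at hu hv
      cases hts : ts[i]? with
      | none => rw [hts] at hu; simp at hu
      | some w =>
        rw [hts] at hu hv
        simp only [Option.map_some] at hu hv
        rw [← Option.some.inj hu, ← Option.some.inj hv]
        refine ih w (List.mem_of_getElem? hts) α β (fun x hx => h x ?_)
        rw [varsL_app]
        rw [List.mem_flatten]
        exact ⟨w.varsL, List.mem_map.mpr ⟨w, List.mem_of_getElem? hts, rfl⟩, hx⟩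

/-- lift a step on a subterm to a step on the whole term -/
theorem subterm_step_lift {R : TRS F} : ∀ {t : Term F} {p : List Nat} {u : Term F},
    SubtermAt t p u → ∀ {v}, OneStep R u v → ∃ t', OneStep R t t' ∧ SubtermAt t' p v := by
  intro t p u h
  induction h with
  | here t => exact fun hv => ⟨_, hv, SubtermAt.here _⟩
  | there hget _ ih =>
    intro v hv
    obtain ⟨w', hw', hsub'⟩ := ih hv
    exact ⟨_, oneStep_congr hw' _ _ _ hget, SubtermAt.there (get?_set_self _ _ _ _ hget) hsub'⟩

/-! ### the well-founded order: rewrite steps and subterms -/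

def ImmSub (a b : Term F) : Prop := ∃ f ss, b = Term.app f ss ∧ a ∈ ss

/-- `Sdn R a b` : `a` is below `b` (one rewrite step from `b`, or an immediate subterm). -/
def Sdn (R : TRS F) (a b : Term F) : Prop := OneStep R b a ∨ ImmSub a b

theorem wf_Sdn {R : TRS F} (hterm : Terminating R) : WellFounded (Sdn R) := by
  constructor
  intro t₀
  suffices H : ∀ t u p, SubtermAt t p u → Acc (Sdn R) u from H t₀ t₀ [] (SubtermAt.here _)
  intro t
  induction t using hterm.induction with
  | _ t ihout =>
    intro u
    induction u using term_ind with
    | hv n =>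
      intro p hsub
      constructor
      intro z hz
      rcases hz with hz | hz
      · obtain ⟨t', ht', hsub'⟩ := subterm_step_lift hsub hz
        exact ihout t' ht' z _ hsub'
      · obtain ⟨f, ss, heq, _⟩ := hz
        exact nomatch heq
    | ha f ts ihargs =>
      intro p hsub
      constructor
      intro z hz
      rcases hz with hz | hz
      · obtain ⟨t', ht', hsub'⟩ := subterm_step_lift hsub hz
        exact ihout t' ht' z _ hsub'
      · obtain ⟨f', ss', heq, hzmem⟩ := hz
        have h1 : f' = f := ((Term.app.injEq _ _ _ _).mp heq.symm).1
        have h2 : ss' = ts := ((Term.app.injEq _ _ _ _).mp heq.symm).2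
        subst h1; subst h2
        obtain ⟨i, hi⟩ := List.getElem?_of_mem hzmem
        exact ihargs z hzmem (p ++ [i])
          (subtermAt_trans hsub (SubtermAt.there hi (SubtermAt.here _)))

/-- the strict order used for the main induction -/
def Below (R : TRS F) : Term F → Term F → Prop := Relation.TransGen (Sdn R)

theorem wf_Below {R : TRS F} (hterm : Terminating R) : WellFounded (Below R) :=
  (wf_Sdn hterm).transGen

theorem belowle_of_star {R : TRS F} {x y : Term F} (h : StarRW R x y) :
    Relation.ReflTransGen (Sdn R) y x := by
  induction h with
  | refl => exact Relation.ReflTransGen.refl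
  | tail _ h2 ih => exact Relation.ReflTransGen.head (Or.inl h2) ih

theorem belowle_of_sub {R : TRS F} {x : Term F} {p : List Nat} {u : Term F}
    (h : SubtermAt x p u) : Relation.ReflTransGen (Sdn R) u x := by
  induction h with
  | here => exact Relation.ReflTransGen.refl
  | there hget _ ih =>
    exact Relation.ReflTransGen.tail ih (Or.inr ⟨_, _, rfl, List.mem_of_getElem? hget⟩)

theorem below_of_step_belowle {R : TRS F} {U v z : Term F} (h : OneStep R U v)
    (h2 : Relation.ReflTransGen (Sdn R) z v) : Below R z U :=
  Relation.TransGen.tail' h2 (Or.inl h)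

theorem belowle_trans {R : TRS F} {x y z : Term F} (h1 : Relation.ReflTransGen (Sdn R) x y)
    (h2 : Relation.ReflTransGen (Sdn R) y z) : Relation.ReflTransGen (Sdn R) x z :=
  Relation.ReflTransGen.trans h1 h2


/-! ### Unification: existence of most general unifiers -/

def UnifiesL (σ : Nat → Term F) (P : List (Term F × Term F)) : Prop :=
  ∀ pr ∈ P, (pr.1).subst σ = (pr.2).subst σ

def IsMGUL (σ : Nat → Term F) (P : List (Term F × Term F)) : Prop :=
  UnifiesL σ P ∧ ∀ τ, UnifiesL τ P → ∃ δ, ∀ x, τ x = (σ x).subst δ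

def pvars (P : List (Term F × Term F)) : List Nat :=
  (P.map (fun pr => (pr.1).varsL ++ (pr.2).varsL)).flatten

def nvP (P : List (Term F × Term F)) : Nat := (pvars P).toFinset.card

def psize (P : List (Term F × Term F)) : Nat :=
  (P.map (fun pr => tsize pr.1 + tsize pr.2)).sum

theorem nvP_mono {P Q : List (Term F × Term F)} (h : ∀ x, x ∈ pvars P → x ∈ pvars Q) :
    nvP P ≤ nvP Q := by
  apply Finset.card_le_card
  intro x hx
  rw [List.mem_toFinset] at hx ⊢
  exact h x hx

/-- the elementary substitution `x ↦ t` -/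
def elimσ (x : Nat) (t : Term F) : Nat → Term F := fun z => if z = x then t else Term.var z

theorem mgul_symm_head {σ : Nat → Term F} {s t : Term F} {P : List (Term F × Term F)}
    (h : IsMGUL σ ((s, t) :: P)) : IsMGUL σ ((t, s) :: P) := by
  obtain ⟨h1, h2⟩ := h
  constructor
  · intro pr hpr
    rcases List.mem_cons.mp hpr with rfl | hpr
    · exact (h1 (s, t) (List.mem_cons_self)).symm
    · exact h1 pr (List.mem_cons_of_mem _ hpr)
  · intro τ hτ
    refine h2 τ ?_
    intro pr hpr
    rcases List.mem_cons.mp hpr with rfl | hpr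
    · exact (hτ (t, s) (List.mem_cons_self)).symm
    · exact hτ pr (List.mem_cons_of_mem _ hpr)

theorem elim_case {x : Nat} {t : Term F} {P' : List (Term F × Term F)}
    (hx : x ∉ t.varsL)
    (hrec : ∃ σ₂, IsMGUL σ₂ (P'.map fun pr => ((pr.1).subst (elimσ x t), (pr.2).subst (elimσ x t)))) :
    ∃ σ, IsMGUL σ ((Term.var x, t) :: P') := by
  obtain ⟨σ₂, hσ₂u, hσ₂g⟩ := hrec
  refine ⟨fun z => (elimσ x t z).subst σ₂, ?_, ?_⟩
  · intro pr hpr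
    rcases List.mem_cons.mp hpr with rfl | hpr
    · show (Term.var x).subst _ = t.subst _
      rw [subst_var']
      have h1 : t.subst (fun z => (elimσ x t z).subst σ₂) = (t.subst (elimσ x t)).subst σ₂ :=
        (subst_subst t _ _).symm
      have h2 : t.subst (elimσ x t) = t := by
        have := subst_ext t (elimσ x t) Term.var (fun y hy => by
          have : y ≠ x := fun hyx => hx (hyx ▸ hy)
          simp [elimσ, this])
        rw [this, subst_var_id]
      rw [h1, h2]
      show (elimσ x t x).subst σ₂ = _
      simp [elimσ]
    · have := hσ₂u ((pr.1).subst (elimσ x t), (pr.2).subst (elimσ x t))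
        (List.mem_map.mpr ⟨pr, hpr, rfl⟩)
      simp only at this
      rw [subst_subst, subst_subst] at this
      exact this
  · intro τ hτ
    have hτx : τ x = t.subst τ := by
      have := hτ (Term.var x, t) (List.mem_cons_self)
      simpa [subst_var'] using this
    have hτpt : ∀ z, (elimσ x t z).subst τ = τ z := by
      intro z
      by_cases hz : z = x
      · subst hz; simp [elimσ, hτx]
      · simp [elimσ, hz, subst_var']
    have hτP'' : UnifiesL τ (P'.map fun pr => ((pr.1).subst (elimσ x t), (pr.2).subst (elimσ x t))) := by
      intro pr hpr
      obtain ⟨pr₀, hpr₀, rfl⟩ := List.mem_map.mp hpr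
      simp only
      rw [subst_subst, subst_subst]
      have e1 : (pr₀.1).subst (fun z => (elimσ x t z).subst τ) = (pr₀.1).subst τ :=
        subst_ext _ _ _ (fun y _ => hτpt y)
      have e2 : (pr₀.2).subst (fun z => (elimσ x t z).subst τ) = (pr₀.2).subst τ :=
        subst_ext _ _ _ (fun y _ => hτpt y)
      rw [e1, e2]
      exact hτ pr₀ (List.mem_cons_of_mem _ hpr₀)
    obtain ⟨δ, hδ⟩ := hσ₂g τ hτP''
    refine ⟨δ, fun z => ?_⟩
    rw [subst_subst]
    have : (elimσ x t z).subst (fun y => (σ₂ y).subst δ) = (elimσ x t z).subst τ :=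
      subst_ext _ _ _ (fun y _ => (hδ y).symm)
    rw [this, hτpt]

theorem zip_of_map_eq {g₁ g₂ : Term F → Term F} : ∀ (ss tt : List (Term F)),
    ss.map g₁ = tt.map g₂ → ∀ pr ∈ ss.zip tt, g₁ pr.1 = g₂ pr.2 := by
  intro ss
  induction ss with
  | nil => intro tt _ pr hpr; simp [List.zip] at hpr
  | cons a ss' ih =>
    intro tt h pr hpr
    cases tt with
    | nil => simp [List.zip] at hpr
    | cons b tt' =>
      simp only [List.map] at h
      have h1 : g₁ a = g₂ b := (List.cons.injEq _ _ _ _ ▸ h : _ ∧ _).1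
      have h2 : ss'.map g₁ = tt'.map g₂ := (List.cons.injEq _ _ _ _ ▸ h : _ ∧ _).2
      rcases List.mem_cons.mp hpr with rfl | hpr
      · exact h1
      · exact ih tt' h2 pr hpr

theorem map_eq_of_zip {g₁ g₂ : Term F → Term F} : ∀ (ss tt : List (Term F)),
    ss.length = tt.length → (∀ pr ∈ ss.zip tt, g₁ pr.1 = g₂ pr.2) →
    ss.map g₁ = tt.map g₂ := by
  intro ss
  induction ss with
  | nil => intro tt hlen _; cases tt with | nil => rfl | cons b tt' => simp at hlen
  | cons a ss' ih =>
    intro tt hlen h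
    cases tt with
    | nil => simp at hlen
    | cons b tt' =>
      simp only [List.map]
      rw [h (a, b) (by simp [List.zip]), ih tt' (by simpa using hlen)
        (fun pr hpr => h pr (by simp [List.zip]; right; simpa [List.zip] using hpr))]

theorem psize_zip : ∀ (ss tt : List (Term F)), ss.length = tt.length →
    ((ss.zip tt).map (fun pr => tsize pr.1 + tsize pr.2)).sum
      = (ss.map tsize).sum + (tt.map tsize).sum := by
  intro ss
  induction ss with
  | nil => intro tt hlen; cases tt with | nil => rfl | cons b tt' => simp at hlen
  | cons a ss' ih =>
    intro tt hlen
    cases tt with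
    | nil => simp at hlen
    | cons b tt' =>
      have h := ih tt' (by simpa using hlen)
      simp only [List.zip] at h ⊢
      simp only [List.zipWith_cons_cons, List.map, List.sum_cons]
      omega

theorem unifyL : ∀ (n m : Nat) (P : List (Term F × Term F)), nvP P < n → psize P < m →
    (∃ μ, UnifiesL μ P) → ∃ σ, IsMGUL σ P := by
  intro n
  induction n with
  | zero => intro m P h; omega
  | succ n ihn =>
    intro m
    induction m with
    | zero => intro P _ h; omega
    | succ m ihm =>
      intro P hn hm hex
      obtain ⟨μ, hμ⟩ := hex
      cases P with
      | nil =>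
        refine ⟨Term.var, fun pr hpr => by simp at hpr, fun τ _ => ⟨τ, fun z => (subst_var' τ z).symm⟩⟩
      | cons pr₁ P' =>
        obtain ⟨s, t⟩ := pr₁
        -- helper facts about the measure
        have hsub_pvars : ∀ z, z ∈ pvars P' → z ∈ pvars ((s, t) :: P') := by
          intro z hz
          simp only [pvars, List.map, List.flatten, List.append_eq, List.mem_append] at hz ⊢
          exact Or.inr hz
        have hμ' : UnifiesL μ P' := fun pr hpr => hμ pr (List.mem_cons_of_mem _ hpr)
        have hμ₁ : s.subst μ = t.subst μ := hμ (s, t) (List.mem_cons_self)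
        -- the var-elimination recursion, applicable when `x ∉ varsL t₀`
        have elimrec : ∀ (x : Nat) (t₀ : Term F), x ∉ t₀.varsL →
            x ∈ pvars ((s, t) :: P') → (∀ z ∈ t₀.varsL, z ∈ pvars ((s, t) :: P')) →
            (∃ μ₀, UnifiesL μ₀ ((Term.var x, t₀) :: P')) →
            ∃ σ, IsMGUL σ ((Term.var x, t₀) :: P') := by
          intro x t₀ hx hxP ht₀P hex₀
          obtain ⟨μ₀, hμ₀⟩ := hex₀
          apply elim_case hx
          -- measure: number of variables strictly decreases
          set P'' := P'.map fun pr => ((pr.1).subst (elimσ x t₀), (pr.2).subst (elimσ x t₀)) with hP''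
          have hP''sub : ∀ z, z ∈ pvars P'' → z ∈ pvars ((s, t) :: P') ∧ z ≠ x := by
            intro z hz
            simp only [pvars, List.mem_flatten, List.mem_map] at hz
            obtain ⟨L, ⟨pr, hpr, rfl⟩, hz⟩ := hz
            rw [hP''] at hpr
            obtain ⟨pr₀, hpr₀, rfl⟩ := List.mem_map.mp hpr
            simp only [List.mem_append] at hz
            have key : ∀ (a : Term F), z ∈ (a.subst (elimσ x t₀)).varsL →
                (∀ y ∈ a.varsL, y ∈ pvars ((s, t) :: P')) → z ∈ pvars ((s, t) :: P') ∧ z ≠ x := by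
              intro a hza ha
              obtain ⟨y, hy, hzy⟩ := (mem_varsL_subst a _ z).mp hza
              by_cases hyx : y = x
              · subst hyx
                simp only [elimσ, if_pos rfl] at hzy
                refine ⟨ht₀P z hzy, fun hzx => hx (hzx ▸ hzy)⟩
              · simp only [elimσ, if_neg hyx, Term.varsL, List.mem_singleton] at hzy
                subst hzy
                exact ⟨ha z hy, hyx⟩
            have hmem : ∀ y, y ∈ (pr₀.1).varsL ∨ y ∈ (pr₀.2).varsL → y ∈ pvars ((s, t) :: P') := by
              intro y hy
              simp only [pvars, List.mem_flatten, List.mem_map]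
              refine ⟨(pr₀.1).varsL ++ (pr₀.2).varsL, ⟨pr₀, List.mem_cons_of_mem _ hpr₀, rfl⟩, ?_⟩
              rw [List.mem_append]; exact hy
            rcases hz with hz | hz
            · exact key pr₀.1 hz (fun y hy => hmem y (Or.inl hy))
            · exact key pr₀.2 hz (fun y hy => hmem y (Or.inr hy))
          have hcard : nvP P'' < nvP ((s, t) :: P') := by
            have hss : (pvars P'').toFinset ⊆ ((pvars ((s, t) :: P')).toFinset).erase x := by
              intro z hz
              rw [List.mem_toFinset] at hz
              obtain ⟨h1, h2⟩ := hP''sub z hz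
              exact Finset.mem_erase.mpr ⟨h2, List.mem_toFinset.mpr h1⟩
            have hc1 : nvP P'' ≤ (((pvars ((s, t) :: P')).toFinset).erase x).card :=
              Finset.card_le_card hss
            have hc2 : (((pvars ((s, t) :: P')).toFinset).erase x).card < nvP ((s, t) :: P') :=
              Finset.card_erase_lt_of_mem (List.mem_toFinset.mpr hxP)
            omega
          -- unifier of P''
          have hμ₀x : μ₀ x = t₀.subst μ₀ := by
            have := hμ₀ (Term.var x, t₀) (List.mem_cons_self)
            simpa [subst_var'] using this
          have hpt : ∀ z, (elimσ x t₀ z).subst μ₀ = μ₀ z := by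
            intro z
            by_cases hz : z = x
            · subst hz; simp [elimσ, hμ₀x]
            · simp [elimσ, hz, subst_var']
          have hμ₀'' : UnifiesL μ₀ P'' := by
            intro pr hpr
            rw [hP''] at hpr
            obtain ⟨pr₀, hpr₀, rfl⟩ := List.mem_map.mp hpr
            simp only
            rw [subst_subst, subst_subst]
            rw [subst_ext _ _ _ (fun y _ => hpt y), subst_ext _ _ _ (fun y _ => hpt y)]
            exact hμ₀ pr₀ (List.mem_cons_of_mem _ hpr₀)
          exact ihn (psize P'' + 1) P'' (by omega) (Nat.lt_succ_self _) ⟨μ₀, hμ₀''⟩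
        -- main case split
        cases s with
        | var x =>
          by_cases hxt : x ∈ t.varsL
          · by_cases hteq : t = Term.var x
            · -- trivial pair
              subst hteq
              have hrec := ihm P' (by
                  refine lt_of_le_of_lt (nvP_mono hsub_pvars) hn)
                (by
                  have : psize ((Term.var x, Term.var x) :: P') = psize P' + 2 := by
                    simp [psize, tsize]; omega
                  omega) ⟨μ, hμ'⟩
              obtain ⟨σ, hσu, hσg⟩ := hrec
              refine ⟨σ, ?_, ?_⟩
              · intro pr hpr
                rcases List.mem_cons.mp hpr with rfl | hpr
                · rfl
                · exact hσu pr hpr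
              · exact fun τ hτ => hσg τ (fun pr hpr => hτ pr (List.mem_cons_of_mem _ hpr))
            · -- occurs-check failure: no unifier, contradiction
              exfalso
              have h1 := hμ₁
              rw [subst_var'] at h1
              rcases tsize_subst_le t μ x hxt with ⟨h2, _⟩ | h2
              · exact hteq h2
              · rw [← h1] at h2; omega
          · -- eliminate x
            have hxP : x ∈ pvars ((Term.var x, t) :: P') := by
              simp [pvars, Term.varsL]
            have htP : ∀ z ∈ t.varsL, z ∈ pvars ((Term.var x, t) :: P') := by
              intro z hz
              simp only [pvars, List.map, List.flatten, List.append_eq, List.mem_append]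
              left
              exact Or.inr hz
            exact elimrec x t hxt hxP htP ⟨μ, hμ⟩
        | app f ss =>
          cases t with
          | var x =>
            by_cases hxs : x ∈ (Term.app f ss).varsL
            · exfalso
              have h1 := hμ₁
              rw [subst_var'] at h1
              rcases tsize_subst_le (Term.app f ss) μ x hxs with ⟨h2, _⟩ | h2
              · exact nomatch h2
              · rw [h1] at h2; omega
            · have hxP : x ∈ pvars ((Term.app f ss, Term.var x) :: P') := by
                simp [pvars, Term.varsL]
              have htP : ∀ z ∈ (Term.app f ss).varsL, z ∈ pvars ((Term.app f ss, Term.var x) :: P') := by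
                intro z hz
                simp only [pvars, List.map, List.flatten, List.append_eq, List.mem_append]
                left
                exact Or.inl hz
              have hexrev : ∃ μ₀, UnifiesL μ₀ ((Term.var x, Term.app f ss) :: P') := by
                refine ⟨μ, ?_⟩
                intro pr hpr
                rcases List.mem_cons.mp hpr with rfl | hpr
                · exact hμ₁.symm
                · exact hμ' pr hpr
              obtain ⟨σ, hσ⟩ := elimrec x (Term.app f ss) hxs hxP htP hexrev
              exact ⟨σ, mgul_symm_head hσ⟩
          | app g tt =>
            -- decomposition
            rw [subst_app, subst_app] at hμ₁
            have hfg : f = g := ((Term.app.injEq _ _ _ _).mp hμ₁).1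
            subst hfg
            have hmaps : ss.map (·.subst μ) = tt.map (·.subst μ) :=
              ((Term.app.injEq _ _ _ _).mp hμ₁).2
            have hlen : ss.length = tt.length := by
              have := congrArg List.length hmaps
              simpa using this
            set P'' := ss.zip tt ++ P' with hP''def
            have hvars'' : ∀ z, z ∈ pvars P'' → z ∈ pvars ((Term.app f ss, Term.app f tt) :: P') := by
              intro z hz
              simp only [hP''def, pvars, List.mem_flatten, List.mem_map] at hz
              obtain ⟨L, ⟨pr, hpr, rfl⟩, hz⟩ := hz
              rw [List.mem_append] at hpr
              rcases hpr with hpr | hpr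
              · have hm := List.of_mem_zip hpr
                simp only [pvars, List.map, List.flatten, List.append_eq, List.mem_append]
                left
                rw [List.mem_append] at hz
                rcases hz with hz | hz
                · left
                  rw [varsL_app, List.mem_flatten]
                  exact ⟨(pr.1).varsL, List.mem_map.mpr ⟨pr.1, hm.1, rfl⟩, hz⟩
                · right
                  rw [varsL_app, List.mem_flatten]
                  exact ⟨(pr.2).varsL, List.mem_map.mpr ⟨pr.2, hm.2, rfl⟩, hz⟩
              · apply hsub_pvars
                simp only [pvars, List.mem_flatten, List.mem_map]
                exact ⟨_, ⟨pr, hpr, rfl⟩, hz⟩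
            have hsz'' : psize P'' < psize ((Term.app f ss, Term.app f tt) :: P') := by
              have h1 : psize P'' = ((ss.zip tt).map (fun pr => tsize pr.1 + tsize pr.2)).sum + psize P' := by
                simp [hP''def, psize]
              have h2 := psize_zip ss tt hlen
              have h3 : psize ((Term.app f ss, Term.app f tt) :: P')
                  = (1 + (ss.map tsize).sum) + (1 + (tt.map tsize).sum) + psize P' := by
                simp [psize, tsize_app]
                try omega
              omega
            have hμ'' : UnifiesL μ P'' := by
              intro pr hpr
              rw [hP''def, List.mem_append] at hpr
              rcases hpr with hpr | hpr
              · exact zip_of_map_eq ss tt hmaps pr hpr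
              · exact hμ' pr hpr
            obtain ⟨σ, hσu, hσg⟩ := ihm P''
              (lt_of_le_of_lt (nvP_mono hvars'') hn) (by omega) ⟨μ, hμ''⟩
            refine ⟨σ, ?_, ?_⟩
            · intro pr hpr
              rcases List.mem_cons.mp hpr with rfl | hpr
              · rw [subst_app, subst_app]
                congr 1
                refine map_eq_of_zip ss tt hlen (fun pr hpr => ?_)
                exact hσu pr (by rw [hP''def, List.mem_append]; exact Or.inl hpr)
              · exact hσu pr (by rw [hP''def, List.mem_append]; exact Or.inr hpr)
            · intro τ hτ
              refine hσg τ ?_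
              intro pr hpr
              rw [hP''def, List.mem_append] at hpr
              rcases hpr with hpr | hpr
              · have hτ₁ := hτ (Term.app f ss, Term.app f tt) (List.mem_cons_self)
                simp only at hτ₁
                rw [subst_app, subst_app] at hτ₁
                have := ((Term.app.injEq _ _ _ _).mp hτ₁).2
                exact zip_of_map_eq ss tt this pr hpr
              · exact hτ pr (List.mem_cons_of_mem _ hpr)

/-- Every unifiable pair of terms has a most general unifier. -/
theorem mgu_exists {s t : Term F} (h : ∃ μ, Unifies μ s t) : ∃ σ, IsMGU σ s t := by
  obtain ⟨μ, hμ⟩ := h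
  have hex : ∃ μ, UnifiesL μ [(s, t)] := ⟨μ, fun pr hpr => by
    rcases List.mem_cons.mp hpr with rfl | hpr
    · exact hμ
    · simp at hpr⟩
  obtain ⟨σ, hσu, hσg⟩ := unifyL (nvP [(s, t)] + 1) (psize [(s, t)] + 1) [(s, t)]
    (Nat.lt_succ_self _) (Nat.lt_succ_self _) hex
  refine ⟨σ, hσu (s, t) (List.mem_cons_self), ?_⟩
  intro τ hτ
  exact hσg τ (fun pr hpr => by
    rcases List.mem_cons.mp hpr with rfl | hpr
    · exact hτ
    · simp at hpr)


/-! ### Variable preservation -/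

theorem le_foldr_max : ∀ (L : List Nat) (z : Nat), z ∈ L → z ≤ L.foldr max 0 := by
  intro L
  induction L with
  | nil => intro z h; simp at h
  | cons a L' ih =>
    intro z h
    rcases List.mem_cons.mp h with rfl | h
    · exact Nat.le_max_left _ _
    · exact le_trans (ih z h) (Nat.le_max_right _ _)

theorem mem_zip_self {α : Type _} : ∀ (ts : List α) (u : α), u ∈ ts → (u, u) ∈ ts.zip ts := by
  intro ts
  induction ts with
  | nil => intro u hu; simp at hu
  | cons a ts' ih =>
    intro u hu
    rcases List.mem_cons.mp hu with rfl | hu'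
    · simp [List.zip]
    · have := ih u hu'
      simp only [List.zip] at this ⊢
      rw [List.zipWith_cons_cons]
      exact List.mem_cons_of_mem _ this

theorem mem_of_get?_set {α : Type _} {l : List α} {i j : Nat} {u : α} (hij : i ≠ j)
    (h : l[j]? = some u) (w : α) : u ∈ l.set i w :=
  List.mem_of_getElem? (by rw [get?_set_ne _ _ _ _ hij]; exact h)

theorem subst_cancel : ∀ (t : Term F) (α β : Nat → Term F),
    t.subst α = t.subst β → ∀ x ∈ t.varsL, α x = β x := by
  intro t
  induction t using term_ind with
  | hv n =>
    intro α β h x hx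
    simp [Term.varsL] at hx
    subst hx
    rw [subst_var', subst_var'] at h
    exact h
  | ha f ts ih =>
    intro α β h x hx
    rw [subst_app, subst_app] at h
    have hmaps := ((Term.app.injEq _ _ _ _).mp h).2
    rw [varsL_app, List.mem_flatten] at hx
    obtain ⟨L, hL, hx⟩ := hx
    obtain ⟨u, hu, rfl⟩ := List.mem_map.mp hL
    have hzz : (u, u) ∈ ts.zip ts := mem_zip_self ts u hu
    have : u.subst α = u.subst β :=
      zip_of_map_eq (g₁ := (·.subst α)) (g₂ := (·.subst β)) ts ts hmaps (u, u) hzz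
    exact ih u hu α β this x hx

theorem rule_shape {R : TRS F} (hqd : QuasiDet (RHSset R)) {l r : Term F} (hlr : (l, r) ∈ R) :
    ∃ fl ls fr rs, l = Term.app fl ls ∧ r = Term.app fr rs ∧ fl ≠ fr := by
  have hmem : (l, r) ∈ RHSset R := Or.inl hlr
  have h1 := hqd.1 (l, r) hmem
  have h2 := (hqd.2.1) (l, r) hmem
  cases l with
  | var n => exact absurd trivial h1.1
  | app fl ls =>
    cases r with
    | var m => exact absurd trivial h1.2
    | app fr rs =>
      refine ⟨fl, ls, fr, rs, rfl, rfl, ?_⟩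
      intro hEq
      exact h2 (by simp [Term.root, hEq])

/-- quasi-determinism of `RHSset R` forces `Var(l) ⊆ Var(r)` for rules of `R` -/
theorem vp1 {R : TRS F} (hqd : QuasiDet (RHSset R)) {l r : Term F} (hlr : (l, r) ∈ R) :
    ∀ x ∈ l.varsL, x ∈ r.varsL := by
  by_contra hcon
  push_neg at hcon
  obtain ⟨x₀, hx₀l, hx₀r⟩ := hcon
  set K := ((l.varsL ++ r.varsL).foldr max 0) + 1 with hK
  have hbound : ∀ z, z ∈ l.varsL ∨ z ∈ r.varsL → z < K := by
    intro z hz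
    have : z ∈ l.varsL ++ r.varsL := List.mem_append.mpr hz
    have := le_foldr_max _ z this
    omega
  set ρ : Nat → Term F := fun y => Term.var (y + K) with hρdef
  have hρ : IsRenaming ρ := ⟨fun y => y + K, fun a b h => by
    have h' : a + K = b + K := h
    omega, fun n => rfl⟩
  set σ' : Nat → Term F := fun z => if z ∈ r.varsL then Term.var (z + K) else Term.var z with hσ'def
  have hmgu : IsMGU σ' r (r.subst ρ) := by
    constructor
    · show r.subst σ' = (r.subst ρ).subst σ'
      rw [subst_subst]
      apply subst_ext
      intro y hy
      have h1 : σ' y = Term.var (y + K) := by simp [hσ'def, hy]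
      have h2 : (ρ y).subst σ' = σ' (y + K) := by rw [hρdef]; exact subst_var' _ _
      have h3 : σ' (y + K) = Term.var (y + K) := by
        have : y + K ∉ r.varsL := by
          intro hmem
          have := hbound (y + K) (Or.inr hmem)
          omega
        simp [hσ'def, this]
      rw [h1, h2, h3]
    · intro τ hτ
      have hconstr : ∀ y ∈ r.varsL, τ y = τ (y + K) := by
        have : r.subst τ = r.subst (fun y => τ (y + K)) := by
          have h1 : (r.subst ρ).subst τ = r.subst (fun y => τ (y + K)) := by
            rw [subst_subst]
            apply subst_ext
            intro y _
            rw [hρdef]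
            exact subst_var' _ _
          rw [← h1]
          exact hτ
        intro y hy
        exact subst_cancel r _ _ this y hy
      refine ⟨fun z => if K ≤ z ∧ (z - K) ∈ r.varsL then τ (z - K) else τ z, fun x => ?_⟩
      by_cases hx : x ∈ r.varsL
      · have h1 : σ' x = Term.var (x + K) := by simp [hσ'def, hx]
        rw [h1, subst_var']
        have : K ≤ x + K ∧ (x + K - K) ∈ r.varsL := by
          constructor
          · omega
          · simpa using hx
        rw [if_pos this]
        simp
      · have h1 : σ' x = Term.var x := by simp [hσ'def, hx]
        rw [h1, subst_var']
        by_cases hx2 : K ≤ x ∧ (x - K) ∈ r.varsL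
        · rw [if_pos hx2]
          have := hconstr (x - K) hx2.2
          have hxe : x - K + K = x := by omega
          rw [hxe] at this
          exact this.symm
        · rw [if_neg hx2]
  have hne : l.subst σ' ≠ (l.subst ρ).subst σ' := by
    intro hEq
    have hmem1 : x₀ ∈ (l.subst σ').varsL := by
      apply (mem_varsL_subst l σ' x₀).mpr
      refine ⟨x₀, hx₀l, ?_⟩
      simp [hσ'def, hx₀r, Term.varsL]
    have hmem2 : x₀ ∉ ((l.subst ρ).subst σ').varsL := by
      intro hmem
      rw [subst_subst] at hmem
      obtain ⟨y, hy, hxy⟩ := (mem_varsL_subst l _ x₀).mp hmem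
      have h2 : (ρ y).subst σ' = σ' (y + K) := by rw [hρdef]; exact subst_var' _ _
      rw [h2] at hxy
      have h3 : σ' (y + K) = Term.var (y + K) := by
        have : y + K ∉ r.varsL := by
          intro hmem'
          have := hbound (y + K) (Or.inr hmem')
          omega
        simp [hσ'def, this]
      rw [h3] at hxy
      simp [Term.varsL] at hxy
      have := hbound x₀ (Or.inl hx₀l)
      omega
    rw [hEq] at hmem1
    exact hmem2 hmem1
  have hRHS : (l.subst σ', (l.subst ρ).subst σ') ∈ RHSset R :=
    Or.inr ⟨l, r, l, r, ρ, σ', hlr, hlr, hρ, hmgu, hne, rfl⟩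
  obtain ⟨fl, ls, fr, rs, hl, _, _⟩ := rule_shape hqd hlr
  have hroot := (hqd.2.1) _ hRHS
  apply hroot
  show (l.subst σ').root = ((l.subst ρ).subst σ').root
  rw [subst_subst, hl, subst_root, subst_root]

theorem vars_replace : ∀ {u : Term F} {p : List Nat} {b w : Term F},
    ReplaceAt u p b w → ∀ {a}, SubtermAt u p a → (∀ y ∈ a.varsL, y ∈ b.varsL) →
    ∀ x ∈ u.varsL, x ∈ w.varsL := by
  intro u p b w h
  induction h with
  | here t u' =>
    intro a hsub hab x hx
    rw [subtermAt_nil hsub] at hab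
    exact hab x hx
  | @there f ts i u₀ p' v w₀ hget hrep ih =>
    intro a hsub hab x hx
    obtain ⟨u₁, hget₁, hsub₁⟩ := subtermAt_cons hsub
    rw [hget] at hget₁
    obtain rfl := Option.some.inj hget₁
    rw [varsL_app, List.mem_flatten] at hx
    obtain ⟨L, hL, hx⟩ := hx
    obtain ⟨u', hu', rfl⟩ := List.mem_map.mp hL
    obtain ⟨j, hj⟩ := List.getElem?_of_mem hu'
    rw [varsL_app, List.mem_flatten]
    by_cases hji : j = i
    · subst hji
      rw [hget] at hj
      obtain rfl := Option.some.inj hj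
      have hx' := ih hsub₁ hab x hx
      refine ⟨w₀.varsL, List.mem_map.mpr ⟨w₀, ?_, rfl⟩, hx'⟩
      exact List.mem_of_getElem? (get?_set_self _ _ _ _ hget)
    · refine ⟨u'.varsL, List.mem_map.mpr ⟨u', ?_, rfl⟩, hx⟩
      exact mem_of_get?_set (fun h => hji h.symm) hj w₀

theorem vars_grow {R : TRS F} (hqd : QuasiDet (RHSset R)) {u w : Term F}
    (h : OneStep R u w) : ∀ x ∈ u.varsL, x ∈ w.varsL := by
  obtain ⟨ρ₀, hρ₀, σ, p, hsub, hrep⟩ := h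
  refine vars_replace hrep hsub ?_
  intro y hy
  obtain ⟨z, hz, hyz⟩ := (mem_varsL_subst _ σ y).mp hy
  exact (mem_varsL_subst _ σ y).mpr ⟨z, vp1 hqd hρ₀ z hz, hyz⟩

theorem vars_grow_star {R : TRS F} (hqd : QuasiDet (RHSset R)) {u w : Term F}
    (h : StarRW R u w) : ∀ x ∈ u.varsL, x ∈ w.varsL := by
  induction h with
  | refl => exact fun x hx => hx
  | tail _ h2 ih => exact fun x hx => vars_grow hqd h2 x (ih x hx)

/-- convergence and quasi-determinism force `Var(r) ⊆ Var(l)` for rules of `R` -/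
theorem vp2 {R : TRS F} (hconv : Convergent R) (hqd : QuasiDet (RHSset R))
    {l r : Term F} (hlr : (l, r) ∈ R) : ∀ x ∈ r.varsL, x ∈ l.varsL := by
  by_contra hcon
  push_neg at hcon
  obtain ⟨y, hyr, hyl⟩ := hcon
  obtain ⟨n, hn⟩ := nf_exists hconv.2 l
  set j := (n.varsL).foldr max 0 + 1 with hj
  set σj : Nat → Term F := fun z => if z = y then Term.var j else Term.var z with hσj
  have hstep : OneStep R l (r.subst σj) := by
    refine ⟨(l, r), hlr, σj, [], ?_, ReplaceAt.here _ _⟩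
    have : l.subst σj = l := by
      have h1 : l.subst σj = l.subst Term.var := by
        apply subst_ext
        intro z hz
        have : z ≠ y := fun hEq => hyl (hEq ▸ hz)
        simp [hσj, this]
      rw [h1, subst_var_id]
    rw [show ((l, r).1.subst σj) = l from this]
    exact SubtermAt.here _
  have hrn : StarRW R (r.subst σj) n :=
    star_to_nf hconv.1 hn (Relation.ReflTransGen.single hstep)
  have hjr : j ∈ (r.subst σj).varsL := by
    apply (mem_varsL_subst r σj j).mpr
    refine ⟨y, hyr, ?_⟩
    simp [hσj, Term.varsL]
  have hjn : j ∈ n.varsL := vars_grow_star hqd hrn j hjr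
  have := le_foldr_max _ j hjn
  omega


/-! ### The main induction -/

theorem onestep_of_rule {R : TRS F} {l r : Term F} (h : (l, r) ∈ R) (σ : Nat → Term F) :
    OneStep R (l.subst σ) (r.subst σ) :=
  ⟨(l, r), h, σ, [], SubtermAt.here _, ReplaceAt.here _ _⟩

theorem rootstep_of_rule {R : TRS F} {l r : Term F} (h : (l, r) ∈ R) (σ : Nat → Term F) :
    RootStep R (l.subst σ) (r.subst σ) :=
  ⟨(l, r), h, σ, rfl, rfl⟩

theorem below_of_star_ne {R : TRS F} {x y : Term F} (h : StarRW R x y) (hne : x ≠ y) :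
    Below R y x := by
  rcases Relation.ReflTransGen.cases_head h with rfl | ⟨z, h1, h2⟩
  · exact absurd rfl hne
  · exact below_of_step_belowle h1 (belowle_of_star h2)

theorem grand {R : TRS F} (hlm : LMSystem R) : ∀ U : Term F,
    (∀ (l r : Term F) (σ : Nat → Term F), (l, r) ∈ R → U = l.subst σ →
      (∀ x ∈ l.varsL, NormalForm R (σ x)) → NormalForm R (r.subst σ)) ∧
    (∀ (l r : Term F) (σ : Nat → Term F), (l, r) ∈ R → U = l.subst σ →
      ∀ w, NRstar R (r.subst σ) w →
        ¬ ∃ (l₂ r₂ : Term F) (σ₂ : Nat → Term F), (l₂, r₂) ∈ R ∧ w = l₂.subst σ₂) := by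
  have hterm := hlm.convergent.2
  have hconf := hlm.convergent.1
  have hqd := hlm.quasiDet
  intro U
  induction U using (wf_Below hterm).induction with
  | _ U IH =>
  have hG1 : ∀ (l r : Term F) (σ : Nat → Term F), (l, r) ∈ R → U = l.subst σ →
      (∀ x ∈ l.varsL, NormalForm R (σ x)) → NormalForm R (r.subst σ) := by
    intro l r σ hlr hU hσnf
    by_contra hred
    obtain ⟨a, ls, b, rs, hl, hr, hab⟩ := rule_shape hqd hlr
    set v := r.subst σ with hv
    set n := nf R v with hn
    have hnv : NFof R v n := nf_spec hterm v
    have hvne : v ≠ n := by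
      intro h
      rw [← h] at hnv
      exact hred hnv.2
    have hu_step : OneStep R U v := hU ▸ onestep_of_rule hlr σ
    have hUn : NFof R U n := ⟨Relation.ReflTransGen.head hu_step hnv.1, hnv.2⟩
    -- the argument-normalized form of U
    set args := ls.map (·.subst σ) with hargs
    set nargs := args.map (nf R) with hnargs
    set ubar := Term.app a nargs with hubar
    have hUapp : U = Term.app a args := by rw [hU, hl, subst_app]
    have hUubar : StarRW R U ubar := by
      rw [hUapp, hubar, hnargs]
      have := starRW_congr_args (R := R) a args (args.map (nf R)) [] (by simp) ?_
      · simpa using this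
      · intro i u' v' hu' hv'
        rw [List.getElem?_map, hu'] at hv'
        simp only [Option.map_some] at hv'
        rw [← Option.some.inj hv']
        exact (nf_spec hterm u').1
    have hubar_n : NFof R ubar n := ⟨star_to_nf hconf hUn hUubar, hnv.2⟩
    have hnargsNF : ∀ z ∈ nargs, NormalForm R z := by
      intro z hz
      rw [hnargs] at hz
      obtain ⟨z₀, _, rfl⟩ := List.mem_map.mp hz
      exact (nf_spec hterm z₀).2
    have hepsubar : EpsIrreducible R ubar := by
      intro p z hsub hp
      cases p with
      | nil => exact absurd rfl hp
      | cons i p' =>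
        obtain ⟨w₀, hget, hsub'⟩ := subtermAt_cons hsub
        exact normalForm_subterm hsub' (hnargsNF w₀ (List.mem_of_getElem? hget))
    -- the two branches for the label of `n`
    have hbranch : n.label = Sum.inl a ∨
        ∃ (A₀ B₀ : Term F) (θ₀ : Nat → Term F), (A₀, B₀) ∈ R ∧
          ubar = A₀.subst θ₀ ∧ n = B₀.subst θ₀ := by
      by_cases hubarNF : NormalForm R ubar
      · left
        have : n = ubar := star_of_nf hubarNF hubar_n.1
        rw [this, hubar]
        rfl
      · right
        have hstep := hlm.forwardClosed ubar ⟨hepsubar, hubarNF⟩ n hubar_n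
        rcases oneStep_cases hstep with hroot | hnr
        · obtain ⟨⟨A₀, B₀⟩, hAB, θ₀, h1, h2⟩ := hroot
          exact ⟨A₀, B₀, θ₀, hAB, h1, h2⟩
        · exfalso
          obtain ⟨f', ss', i, u₀, v₀, hub, hget, hstep₀, _⟩ := hnr
          have hss' : ss' = nargs := by
            rw [hubar] at hub
            exact ((Term.app.injEq _ _ _ _).mp hub.symm).2
          subst hss'
          exact hnargsNF u₀ (List.mem_of_getElem? hget) _ hstep₀
    -- the derivation from `v` to `n`
    have hvlabel : v.label = Sum.inl b := by rw [hv, hr]; exact subst_label _ _ _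
    rcases star_dec hnv.1 with hnrII | ⟨y, y', hnry, hrooty, hresty⟩
    · -- case (II): all non-root
      have hnlab : n.label = Sum.inl b := by rw [← nrstar_label hnrII, hvlabel]
      rcases hbranch with hα | ⟨A₀, B₀, θ₀, hAB, hubarA, hnB⟩
      · rw [hα] at hnlab
        exact hab (Sum.inl.inj hnlab)
      · -- shapes of the shortcut rule
        obtain ⟨a₀, As, b₀, Bs, hA₀, hB₀, _⟩ := rule_shape hqd hAB
        have ha₀ : a₀ = a := by
          have h1 : ubar.label = Sum.inl a₀ := by rw [hubarA, hA₀]; exact subst_label _ _ _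
          have h2 : ubar.label = Sum.inl a := by rw [hubar]; rfl
          rw [h1] at h2
          exact Sum.inl.inj h2
        have hb₀ : b₀ = b := by
          have h1 : n.label = Sum.inl b₀ := by rw [hnB, hB₀]; exact subst_label _ _ _
          rw [h1] at hnlab
          exact Sum.inl.inj hnlab
        have hsim : RootPairSimilar (l, r) (A₀, B₀) := by
          left
          constructor
          · show l.root = A₀.root
            rw [hl, hA₀, Term.root, Term.root, ha₀]
          · show r.root = B₀.root
            rw [hr, hB₀, Term.root, Term.root, hb₀]
        by_cases heq : ((l, r) : Rule F) = (A₀, B₀)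
        · -- the sub-sub-case: `(l,r) = (A₀,B₀)`, use the componentwise descent
          have hlA : l = A₀ := congrArg Prod.fst heq
          have hrB : r = B₀ := congrArg Prod.snd heq
          -- the descent lemma
          have rdiff : ∀ (w : Term F), (∀ x ∈ w.varsL, NormalForm R (σ x)) →
              ∀ (θ : Nat → Term F), Relation.ReflTransGen (Sdn R) (w.subst σ) v →
              StarRW R (w.subst σ) (w.subst θ) → w.subst σ = w.subst θ := by
            intro w
            induction w using term_ind with
            | hv x =>
              intro hnx θ _ hstar
              simp only [subst_var'] at hstar ⊢
              exact (star_of_nf (hnx x (by simp [Term.varsL])) hstar).symm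
            | ha m ws ihw =>
              intro hnw θ hbelow hstar
              rcases star_dec hstar with hnr | ⟨y₃, y₃', hnr3, hroot3, hrest3⟩
              · -- componentwise
                have hproj := nrstar_proj hnr m (ws.map (·.subst σ)) (subst_app _ _ _)
                obtain ⟨tt, htt, hlen, hcw⟩ := hproj
                have httm : tt = ws.map (·.subst θ) := by
                  have h1 : (Term.app m ws).subst θ = Term.app m (ws.map (·.subst θ)) :=
                    subst_app _ _ _
                  rw [h1] at htt
                  exact ((Term.app.injEq _ _ _ _).mp htt).2.symm
                subst httm
                rw [subst_app, subst_app]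
                congr 1
                apply List.map_congr_left
                intro z hz
                obtain ⟨j, hj⟩ := List.getElem?_of_mem hz
                have hjσ : (ws.map (·.subst σ))[j]? = some (z.subst σ) := by
                  rw [List.getElem?_map, hj]; rfl
                have hjθ : (ws.map (·.subst θ))[j]? = some (z.subst θ) := by
                  rw [List.getElem?_map, hj]; rfl
                refine ihw z hz (fun x hx => hnw x ?_) θ ?_ (hcw j _ _ hjσ hjθ)
                · rw [varsL_app, List.mem_flatten]
                  exact ⟨z.varsL, List.mem_map.mpr ⟨z, hz, rfl⟩, hx⟩
                · refine belowle_trans (belowle_of_sub (x := (Term.app m ws).subst σ)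
                    (p := [j]) ?_) hbelow
                  rw [subst_app]
                  exact SubtermAt.there hjσ (SubtermAt.here _)
              · -- a root step happens strictly inside: contradiction with IH-G2
                obtain ⟨⟨l₃, r₃⟩, hl₃r₃, σ₃, hy₃, hy₃'⟩ := hroot3
                have hbelow₃ : Below R y₃ U :=
                  below_of_step_belowle hu_step
                    (belowle_trans (belowle_of_star (nrstar_star hnr3)) hbelow)
                have hG2y := (IH y₃ hbelow₃).2 l₃ r₃ σ₃ hl₃r₃ hy₃
                obtain ⟨m₃, l₃s, c₃, r₃s, hl₃, hr₃, hm₃c₃⟩ := rule_shape hqd hl₃r₃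
                have hy₃lab : y₃.label = Sum.inl m := by
                  rw [← nrstar_label hnr3, subst_app]; rfl
                have hm₃ : m₃ = m := by
                  have : y₃.label = Sum.inl m₃ := by rw [hy₃, hl₃]; exact subst_label _ _ _
                  rw [this] at hy₃lab
                  exact Sum.inl.inj hy₃lab
                have hwθlab : ((Term.app m ws).subst θ).label = Sum.inl m := by
                  rw [subst_app]; rfl
                rcases star_dec hrest3 with hnr4 | ⟨m₂, m₂', hnr4, hroot4, _⟩
                · exfalso
                  have h1 : y₃'.label = Sum.inl c₃ := by
                    rw [hy₃', hr₃]; exact subst_label _ _ _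
                  have h2 := nrstar_label hnr4
                  rw [h1, hwθlab] at h2
                  exact hm₃c₃ (by rw [hm₃]; exact (Sum.inl.inj h2).symm)
                · obtain ⟨⟨l₄, r₄⟩, hl₄r₄, σ₄, hm₂, _⟩ := hroot4
                  exact (hG2y m₂ (hy₃' ▸ hnr4) ⟨l₄, r₄, σ₄, hl₄r₄, hm₂⟩).elim
          have hvars : ∀ x ∈ r.varsL, NormalForm R (σ x) :=
            fun x hx => hσnf x (vp2 hlm.convergent hqd hlr x hx)
          have hkey := rdiff r hvars θ₀ (by rw [← hv]) (by
            rw [← hv, hrB, ← hnB]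
            exact nrstar_star hnrII)
          rw [← hv, hrB, ← hnB] at hkey
          exact hvne hkey
        · exact hqd.2.2 (l, r) (Or.inl hlr) (A₀, B₀) (Or.inl hAB) heq hsim
    · -- case (I): a root step occurs on the way from `v` to `n`
      obtain ⟨⟨l₂, r₂⟩, hl₂r₂, σ₂, hy, hy'⟩ := hrooty
      obtain ⟨b₂, l₂s, c₂, r₂s, hl₂, hr₂, hb₂c₂⟩ := rule_shape hqd hl₂r₂
      have hylab : y.label = Sum.inl b := by rw [← nrstar_label hnry, hvlabel]
      have hb₂ : b₂ = b := by
        have : y.label = Sum.inl b₂ := by rw [hy, hl₂]; exact subst_label _ _ _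
        rw [this] at hylab
        exact Sum.inl.inj hylab
      have hbelowy : Below R y U :=
        below_of_step_belowle hu_step (belowle_of_star (nrstar_star hnry))
      have hG2y := (IH y hbelowy).2 l₂ r₂ σ₂ hl₂r₂ hy
      -- the derivation from `y'` to `n` is all non-root
      have hnr' : NRstar R y' n := by
        rcases star_dec hresty with h | ⟨m₂, m₂', hnr4, hroot4, _⟩
        · exact h
        · exfalso
          obtain ⟨⟨l₄, r₄⟩, hl₄r₄, σ₄, hm₂, _⟩ := hroot4
          exact hG2y m₂ (hy' ▸ hnr4) ⟨l₄, r₄, σ₄, hl₄r₄, hm₂⟩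
      have hnlab : n.label = Sum.inl c₂ := by
        rw [← nrstar_label hnr', hy', hr₂]
        exact subst_label _ _ _
      -- the normalized instance of the second rule
      set σ₂N : Nat → Term F := fun x => nf R (σ₂ x) with hσ₂N
      have hyN : StarRW R y (l₂.subst σ₂N) := by
        rw [hy]
        exact substRW R l₂ σ₂ σ₂N (fun x _ => (nf_spec hterm (σ₂ x)).1)
      have hbelowUN : Below R (l₂.subst σ₂N) U :=
        below_of_step_belowle hu_step
          (belowle_trans (belowle_of_star hyN)
            (belowle_of_star (nrstar_star hnry)))
      have hr₂N : NormalForm R (r₂.subst σ₂N) :=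
        (IH _ hbelowUN).1 l₂ r₂ σ₂N hl₂r₂ rfl (fun x _ => (nf_spec hterm (σ₂ x)).2)
      have hy'N : StarRW R y' (r₂.subst σ₂N) := by
        rw [hy']
        exact substRW R r₂ σ₂ σ₂N (fun x _ => (nf_spec hterm (σ₂ x)).1)
      have hnr₂N : n = r₂.subst σ₂N := by
        obtain ⟨z, hz1, hz2⟩ := hconf y' (r₂.subst σ₂N) n hy'N (nrstar_star hnr')
        rw [star_of_nf hr₂N hz1] at hz2
        exact (star_of_nf hnv.2 hz2).symm
      rcases hbranch with hα | ⟨A₀, B₀, θ₀, hAB, hubarA, hnB⟩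
      · -- (α): root pair repetition between `(l,r)` and `(l₂,r₂)`
        have hc₂a : a = c₂ := by
          rw [hα] at hnlab
          exact Sum.inl.inj hnlab
        have hsim : RootPairSimilar (l, r) (l₂, r₂) := by
          right
          constructor
          · show l.root = r₂.root
            rw [hl, hr₂, Term.root, Term.root, hc₂a]
          · show r.root = l₂.root
            rw [hr, hl₂, Term.root, Term.root, hb₂]
        have hne : ((l, r) : Rule F) ≠ (l₂, r₂) := by
          intro hEq
          have : l = l₂ := congrArg Prod.fst hEq
          rw [hl, hl₂] at this
          have := ((Term.app.injEq _ _ _ _).mp this).1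
          rw [this, hb₂] at hab
          exact hab rfl
        exact hqd.2.2 (l, r) (Or.inl hlr) (l₂, r₂) (Or.inl hl₂r₂) hne hsim
      · -- (β): construct an RHS overlap between `(A₀,B₀)` and `(l₂,r₂)`
        obtain ⟨a₀, As, b₀, Bs, hA₀, hB₀, _⟩ := rule_shape hqd hAB
        have ha₀ : a₀ = a := by
          have h1 : ubar.label = Sum.inl a₀ := by rw [hubarA, hA₀]; exact subst_label _ _ _
          have h2 : ubar.label = Sum.inl a := by rw [hubar]; rfl
          rw [h1] at h2
          exact Sum.inl.inj h2
        -- the common instance `n` of `B₀` and `r₂`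
        set K₂ := ((B₀.varsL).foldr max 0) + 1 with hK₂
        set ρ₂ : Nat → Term F := fun z => Term.var (z + K₂) with hρ₂
        have hρ₂ren : IsRenaming ρ₂ := ⟨fun z => z + K₂, fun p q h => by
          have h' : p + K₂ = q + K₂ := h
          omega, fun _ => rfl⟩
        set μ₀ : Nat → Term F := fun z => if z < K₂ then θ₀ z else σ₂N (z - K₂) with hμ₀
        have hunif : Unifies μ₀ B₀ (r₂.subst ρ₂) := by
          show B₀.subst μ₀ = (r₂.subst ρ₂).subst μ₀
          have h1 : B₀.subst μ₀ = B₀.subst θ₀ := by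
            apply subst_ext
            intro z hz
            have : z < K₂ := by
              have := le_foldr_max _ z hz
              omega
            simp [hμ₀, this]
          have h2 : (r₂.subst ρ₂).subst μ₀ = r₂.subst σ₂N := by
            rw [subst_subst]
            apply subst_ext
            intro z _
            have e1 : (ρ₂ z).subst μ₀ = μ₀ (z + K₂) := by rw [hρ₂]; exact subst_var' _ _
            have e2 : μ₀ (z + K₂) = σ₂N z := by
              have hge : ¬ (z + K₂ < K₂) := by omega
              simp only [hμ₀, if_neg hge]
              congr 1
              omega
            rw [e1, e2]
          rw [h1, h2, ← hnB, hnr₂N]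
        obtain ⟨μ, hμ⟩ := mgu_exists ⟨μ₀, hunif⟩
        have hneq : A₀.subst μ ≠ (l₂.subst ρ₂).subst μ := by
          intro hEq
          have h1 : (A₀.subst μ).root = some a := by rw [hA₀, ha₀]; exact subst_root _ _ _
          have h2 : ((l₂.subst ρ₂).subst μ).root = some b := by
            rw [subst_subst, hl₂]
            rw [subst_root, hb₂]
          rw [hEq, h2] at h1
          exact hab (Option.some.inj h1).symm
        have hRHS : ((A₀.subst μ, (l₂.subst ρ₂).subst μ) : Rule F) ∈ RHSset R :=
          Or.inr ⟨A₀, B₀, l₂, r₂, ρ₂, μ, hAB, hl₂r₂, hρ₂ren, hμ, hneq, rfl⟩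
        have hsim : RootPairSimilar (l, r) (A₀.subst μ, (l₂.subst ρ₂).subst μ) := by
          left
          constructor
          · show l.root = (A₀.subst μ).root
            rw [hl, hA₀, Term.root, subst_root, ha₀]
          · show r.root = ((l₂.subst ρ₂).subst μ).root
            rw [hr, subst_subst, hl₂, Term.root, subst_root, hb₂]
        by_cases heq : ((l, r) : Rule F) = (A₀.subst μ, (l₂.subst ρ₂).subst μ)
        · -- then `r` would be reducible, contradicting right-reducedness
          have hrval : r = (l₂.subst ρ₂).subst μ := congrArg Prod.snd heq
          have hrred : OneStep R r ((r₂.subst ρ₂).subst μ) := by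
            rw [hrval, subst_subst, subst_subst]
            exact onestep_of_rule hl₂r₂ _
          exact hlm.rightReduced (l, r) hlr _ hrred
        · exact hqd.2.2 (l, r) (Or.inl hlr) _ hRHS heq hsim
  refine ⟨hG1, ?_⟩
  -- G2
  intro l r σ hlr hU w hnrw hlhs
  obtain ⟨l₅, r₅, σ₅, hl₅r₅, hw⟩ := hlhs
  obtain ⟨a, ls, b, rs, hl, hr, hab⟩ := rule_shape hqd hlr
  set σN : Nat → Term F := fun x => nf R (σ x) with hσN
  have hUN : StarRW R U (l.subst σN) := by
    rw [hU]
    exact substRW R l σ σN (fun x _ => (nf_spec hterm (σ x)).1)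
  by_cases hUeq : U = l.subst σN
  · -- σ is already normalized on the variables of l
    have hσnf : ∀ x ∈ l.varsL, NormalForm R (σ x) := by
      intro x hx
      have := subst_cancel l σ σN (by rw [← hU, hUeq]) x hx
      rw [this, hσN]
      exact (nf_spec hterm (σ x)).2
    have hNF := hG1 l r σ hlr hU hσnf
    have hwrσ : w = r.subst σ := star_of_nf hNF (nrstar_star hnrw)
    have : OneStep R w ((r₅).subst σ₅) := by
      rw [hw]
      exact onestep_of_rule hl₅r₅ σ₅
    rw [hwrσ] at this
    exact hNF _ this
  · have hbelowN : Below R (l.subst σN) U := below_of_star_ne hUN hUeq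
    have hrN : NormalForm R (r.subst σN) :=
      (IH _ hbelowN).1 l r σN hlr rfl (fun x _ => (nf_spec hterm (σ x)).2)
    have hvN : StarRW R (r.subst σ) (r.subst σN) :=
      substRW R r σ σN (fun x _ => (nf_spec hterm (σ x)).1)
    obtain ⟨b₅, l₅s, c₅, r₅s, hl₅, hr₅, hb₅c₅⟩ := rule_shape hqd hl₅r₅
    have hwlab : w.label = Sum.inl b := by
      rw [← nrstar_label hnrw, hr]
      exact subst_label _ _ _
    have hb₅ : b₅ = b := by
      have : w.label = Sum.inl b₅ := by rw [hw, hl₅]; exact subst_label _ _ _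
      rw [this] at hwlab
      exact Sum.inl.inj hwlab
    have hw' : StarRW R (r.subst σ) (r₅.subst σ₅) :=
      Relation.ReflTransGen.tail (nrstar_star hnrw) (by rw [hw] at *; exact onestep_of_rule hl₅r₅ σ₅)
    have hjoin : StarRW R (r₅.subst σ₅) (r.subst σN) := by
      obtain ⟨z, hz1, hz2⟩ := hconf (r.subst σ) (r.subst σN) (r₅.subst σ₅) hvN hw'
      rw [star_of_nf hrN hz1] at hz2
      exact hz2
    have hG2w := (IH w (below_of_step_belowle (hU ▸ onestep_of_rule hlr σ)
      (belowle_of_star (nrstar_star hnrw)))).2 l₅ r₅ σ₅ hl₅r₅ hw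
    rcases star_dec hjoin with hnr | ⟨m₂, m₂', hnr4, hroot4, _⟩
    · have h1 : (r₅.subst σ₅).label = Sum.inl c₅ := by rw [hr₅]; exact subst_label _ _ _
      have h2 : (r.subst σN).label = Sum.inl b := by rw [hr]; exact subst_label _ _ _
      have := nrstar_label hnr
      rw [h1, h2] at this
      exact hb₅c₅ (by rw [hb₅]; exact (Sum.inl.inj this).symm)
    · obtain ⟨⟨l₄, r₄⟩, hl₄r₄, σ₄, hm₂, _⟩ := hroot4
      exact hG2w m₂ hnr4 ⟨l₄, r₄, σ₄, hl₄r₄, hm₂⟩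


/-! ### Label stability and componentwise decomposition -/

theorem label_stable {R : TRS F} (hlm : LMSystem R) {l r : Term F} {σ : Nat → Term F}
    (hlr : (l, r) ∈ R) : ∀ t, StarRW R (r.subst σ) t → t.label = (r.subst σ).label := by
  intro t h
  rcases star_dec h with hnr | ⟨m, m', hnr, hroot, _⟩
  · exact (nrstar_label hnr).symm
  · exfalso
    obtain ⟨⟨l₄, r₄⟩, h4, σ₄, hm, _⟩ := hroot
    exact (grand hlm (l.subst σ)).2 l r σ hlr rfl m hnr ⟨l₄, r₄, σ₄, h4, hm⟩

theorem cm {R : TRS F} (hlm : LMSystem R) : ∀ {s t : Term F}, StarRW R s t →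
    s.label = t.label →
    (∀ n, s = Term.var n → t = Term.var n) ∧
    (∀ f ss, s = Term.app f ss → ∃ tt, t = Term.app f tt ∧ ss.length = tt.length ∧
      ∀ (i : Nat) u v, ss[i]? = some u → tt[i]? = some v → StarRW R u v) := by
  intro s t h
  induction h using Relation.ReflTransGen.head_induction_on with
  | refl =>
    intro _
    refine ⟨fun n hn => hn, fun f ss hs => ⟨ss, hs, rfl, fun i u v hu hv => ?_⟩⟩
    rw [hu] at hv
    exact (Option.some.inj hv) ▸ Relation.ReflTransGen.refl
  | head hstep hrest ih =>
    rename_i s₀ s₁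
    intro hlab
    rcases oneStep_cases hstep with hroot | hnr
    · exfalso
      obtain ⟨⟨l, r⟩, hlr, σ, hs₀, hs₁⟩ := hroot
      obtain ⟨a, ls, b, rs, hl, hr, hab⟩ := rule_shape hlm.quasiDet hlr
      have h1 : t.label = Sum.inl b := by
        have h2 := label_stable hlm hlr t (hs₁ ▸ hrest)
        rw [h2, hr]
        exact subst_label _ _ _
      have h2 : s₀.label = Sum.inl a := by
        rw [hs₀, hl]
        exact subst_label _ _ _
      rw [h2, h1] at hlab
      exact hab (Sum.inl.inj hlab)
    · have hlabs := nrStep_label hnr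
      have IH := ih (by rw [← hlabs]; exact hlab)
      obtain ⟨f, ss, i, u₀, v₀, hs₀, hget, hstep₀, hs₁⟩ := hnr
      constructor
      · intro n hn
        rw [hn] at hs₀
        exact nomatch hs₀
      · intro f' ss' hs₀'
        rw [hs₀'] at hs₀
        have hf : f = f' := ((Term.app.injEq _ _ _ _).mp hs₀).1.symm
        have hss : ss = ss' := ((Term.app.injEq _ _ _ _).mp hs₀).2.symm
        subst hf; subst hss
        obtain ⟨tt, htt, hlen, hcw⟩ := IH.2 f (ss.set i v₀) hs₁
        refine ⟨tt, htt, by rw [← hlen]; simp, fun j u v hu hv => ?_⟩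
        by_cases hij : i = j
        · subst hij
          rw [hget] at hu
          obtain rfl := Option.some.inj hu
          exact Relation.ReflTransGen.head hstep₀ (hcw i v₀ v (get?_set_self _ _ _ _ hget) hv)
        · exact hcw j u v (by rw [get?_set_ne _ _ _ _ hij]; exact hu) hv

/-- the forward direction of the main theorem -/
theorem fwd {R : TRS F} (hlm : LMSystem R) : ∀ (p : List Nat) (s t : Term F),
    StarRW R s t → ODP s t p →
    ∃ u v, SubtermAt s p u ∧ SubtermAt t p v ∧ StarRW R u v := by
  intro p
  induction p with
  | nil => intro s t h _; exact ⟨s, t, SubtermAt.here _, SubtermAt.here _, h⟩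
  | cons i p' ih =>
    intro s t hst hodp
    obtain ⟨h1, h2, h3⟩ := hodp
    have hlab : s.label = t.label := by
      have h := h3 [] ⟨i :: p', rfl⟩ (by simp)
      rw [labelAt_nil, labelAt_nil] at h
      exact Option.some.inj h
    cases s with
    | var n =>
      exfalso
      have ht := (cm hlm hst hlab).1 n rfl
      rw [ht] at h2
      exact h2 rfl
    | app f ss =>
      obtain ⟨tt, rfl, hlen, hcw⟩ := (cm hlm hst hlab).2 f ss rfl
      cases hss : ss[i]? with
      | none =>
        exfalso
        have hi : ss.length ≤ i := by
          by_contra hlt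
          push_neg at hlt
          obtain ⟨u, hu⟩ := get?_exists_of_lt ss i hlt
          rw [hu] at hss
          exact nomatch hss
        have htt : tt[i]? = none := get?_none_of_le tt i (by omega)
        apply h2
        rw [labelAt_cons, labelAt_cons, hss, htt]
      | some u =>
        have hilt : i < ss.length := by
          by_contra hcon
          push_neg at hcon
          rw [get?_none_of_le ss i hcon] at hss
          exact nomatch hss
        obtain ⟨v, hv⟩ := get?_exists_of_lt tt i (by omega)
        have huv : StarRW R u v := hcw i u v hss hv
        have hodp' : ODP u v p' := by
          refine ⟨?_, ?_, ?_⟩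
          · rcases h1 with h | h
            · left
              rw [labelAt_cons, hss] at h
              exact h
            · right
              rw [labelAt_cons, hv] at h
              exact h
          · intro hEq
            apply h2
            rw [labelAt_cons, labelAt_cons, hss, hv]
            exact hEq
          · intro q hq hne
            have hpre : (i :: q) <+: (i :: p') := by
              obtain ⟨rr, hrr⟩ := hq
              exact ⟨rr, by rw [List.cons_append, hrr]⟩
            have hne' : (i :: q) ≠ (i :: p') := by
              intro hEq
              injection hEq with _ hEq'
              exact hne hEq'
            have h := h3 (i :: q) hpre hne'
            rw [labelAt_cons, labelAt_cons, hss, hv] at h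
            exact h
        obtain ⟨U, V, hU, hV, hUV⟩ := ih u v huv hodp'
        exact ⟨U, V, SubtermAt.there hss hU, SubtermAt.there hv hV, hUV⟩

/-- in an LM-system, `s →* t` iff for every outermost distinguishing
position `p` of `s` and `t` one has `s|_p →* t|_p`. -/
theorem odp_reductions {F : Type} (R : TRS F) (hlm : LMSystem R) (s t : Term F) :
    StarRW R s t ↔
      ∀ p, ODP s t p →
        ∃ u v, SubtermAt s p u ∧ SubtermAt t p v ∧ StarRW R u v := by
  constructor
  · -- forward direction
    intro h p hodp
    exact fwd hlm p s t h hodp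
  · -- backward direction
    intro h
    exact odp_backward (sizeOf s + 1) s t (Nat.lt_succ_self _) h
end

section
/- The rewrite system consisting of the single rule f(g(h(x))) → g(x) is an LM-system, yet the congruence class of g(y) modulo this system is infinite; hence not every LM-system has a finite equational theory. -/
variable {F : Type}

inductive Sym3 : Type
  | f | g | h

/-! ### Auxiliary development for the specific system `f(g(h(x))) → g(x)` -/

namespace LM18
open Sym3

deriving instance DecidableEq for Sym3

abbrev T3 := Term Sym3

def lhs : T3 := Term.app f [Term.app g [Term.app h [Term.var 0]]]
def rhs : T3 := Term.app g [Term.var 0]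

def Rr : TRS Sym3 := {(lhs, rhs)}

/-- size of a term -/
def size : T3 → Nat
  | .var _ => 1
  | .app _ ts => 1 + (ts.attach.map fun ⟨t, _⟩ => size t).sum

/-- number of `g` symbols -/
def gcnt : T3 → Nat
  | .var _ => 0
  | .app c ts => (if c = g then 1 else 0) + (ts.attach.map fun ⟨t, _⟩ => gcnt t).sum

@[simp] lemma size_var (n : Nat) : size (.var n) = 1 := by simp [size]
@[simp] lemma size_app (c : Sym3) (ts : List T3) :
    size (.app c ts) = 1 + (ts.map size).sum := by simp [size]
@[simp] lemma gcnt_var (n : Nat) : gcnt (.var n) = 0 := by simp [gcnt]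
@[simp] lemma gcnt_app (c : Sym3) (ts : List T3) :
    gcnt (.app c ts) = (if c = g then 1 else 0) + (ts.map gcnt).sum := by simp [gcnt]

lemma le_sum_of_mem {f : T3 → Nat} {u : T3} {ts : List T3} (h : u ∈ ts) :
    f u ≤ (ts.map f).sum :=
  List.single_le_sum (fun _ _ => Nat.zero_le _) _ (List.mem_map_of_mem (f := f) h)

lemma size_lt_of_mem {u : T3} {c : Sym3} {ts : List T3} (h : u ∈ ts) :
    size u < size (.app c ts) := by
  have := le_sum_of_mem (f := size) h
  simp only [size_app]; omega

lemma mem_of_get? {u : T3} {ts : List T3} {i : Nat} (h : ts[i]? = some u) : u ∈ ts :=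
  List.mem_of_getElem? h

/-- substitution on concrete terms -/
@[simp] lemma subst_var {F : Type} (σ : Nat → Term F) (n : Nat) :
    (Term.var n).subst σ = σ n := by simp [Term.subst]
@[simp] lemma subst_app {F : Type} (σ : Nat → Term F) (c : F) (ts : List (Term F)) :
    (Term.app c ts).subst σ = Term.app c (ts.map (Term.subst σ)) := by
  simp [Term.subst]

lemma lhs_subst (σ : Nat → T3) :
    lhs.subst σ = Term.app f [Term.app g [Term.app h [σ 0]]] := by simp [lhs]
lemma rhs_subst (σ : Nat → T3) : rhs.subst σ = Term.app g [σ 0] := by simp [rhs]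

/-- concrete one-step rewriting -/
inductive Step : T3 → T3 → Prop
  | root (t : T3) : Step (.app f [.app g [.app h [t]]]) (.app g [t])
  | congr {c : Sym3} {ts : List T3} {i : Nat} {u w : T3} :
      ts[i]? = some u → Step u w → Step (.app c ts) (.app c (ts.set i w))

lemma step_in_context {a b : T3} (hab : Step a b) :
    ∀ {s : T3} {p : List Nat} {t : T3}, SubtermAt s p a → ReplaceAt s p b t → Step s t := by
  intro s p t hsub
  induction hsub generalizing t with
  | here s => intro hrep; cases hrep; exact hab
  | there hget hsub ih =>
      intro hrep
      cases hrep with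
      | there hget' hrep' =>
        rw [hget'] at hget
        cases hget
        exact Step.congr hget' (ih hab hrep')

lemma onestep_iff {s t : T3} : OneStep Rr s t ↔ Step s t := by
  constructor
  · rintro ⟨ρ, hρ, σ, p, hsub, hrep⟩
    rcases hρ with rfl
    refine step_in_context ?_ hsub hrep
    rw [lhs_subst, rhs_subst]
    exact Step.root _
  · intro h
    induction h with
    | root t =>
        refine ⟨(lhs, rhs), rfl, fun _ => t, [], ?_, ?_⟩
        · rw [lhs_subst]; exact SubtermAt.here _
        · rw [rhs_subst]; exact ReplaceAt.here _ _
    | congr hget _ ih =>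
        obtain ⟨ρ, hρ, σ, p, hsub, hrep⟩ := ih
        exact ⟨ρ, hρ, σ, _ :: p, SubtermAt.there hget hsub, ReplaceAt.there hget hrep⟩

lemma sum_map_set_lt {h : T3 → Nat} : ∀ (ts : List T3) (i : Nat) (u w : T3),
    ts[i]? = some u → h w < h u → ((ts.set i w).map h).sum < (ts.map h).sum := by
  intro ts
  induction ts with
  | nil => intro i u w hg; simp at hg
  | cons a ts ih =>
      intro i u w hg hlt
      cases i with
      | zero =>
          simp only [List.getElem?_cons_zero, List.getElem?_cons_succ] at hg; cases hg
          simp only [List.set, List.map, List.sum_cons]; omega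
      | succ i =>
          simp only [List.getElem?_cons_zero, List.getElem?_cons_succ] at hg
          have := ih i u w hg hlt
          simp only [List.set, List.map, List.sum_cons]
          omega

lemma sum_map_set_eq {h : T3 → Nat} : ∀ (ts : List T3) (i : Nat) (u w : T3),
    ts[i]? = some u → h w = h u → ((ts.set i w).map h).sum = (ts.map h).sum := by
  intro ts
  induction ts with
  | nil => intro i u w hg; simp at hg
  | cons a ts ih =>
      intro i u w hg heq
      cases i with
      | zero => simp at hg; subst hg; simp [heq]
      | succ i =>
          simp only [List.getElem?_cons_zero, List.getElem?_cons_succ] at hg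
          have := ih i u w hg heq
          simp only [List.set, List.map, List.sum_cons]
          omega

lemma step_size_lt {s t : T3} (h : Step s t) : size t < size s := by
  induction h with
  | root t => simp only [size_app, List.map, List.sum_cons, List.sum_nil]; omega
  | congr hget _ ih =>
      simp only [size_app]
      have := sum_map_set_lt _ _ _ _ hget ih
      omega

lemma step_gcnt {s t : T3} (h : Step s t) : gcnt t = gcnt s := by
  induction h with
  | root t => simp
  | congr hget _ ih =>
      simp only [gcnt_app]
      have := sum_map_set_eq _ _ _ _ hget ih
      omega

end LM18

namespace LM18
open Sym3

/-- collapse a root redex, if present -/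
def red1 : T3 → T3
  | .app Sym3.f [.app Sym3.g [.app Sym3.h [s]]] => .app Sym3.g [s]
  | t => t

lemma red1_cases (t : T3) :
    (∃ s, t = .app f [.app g [.app h [s]]] ∧ red1 t = .app g [s]) ∨
    (red1 t = t ∧ ∀ s, t ≠ .app f [.app g [.app h [s]]]) := by
  unfold red1
  split
  · exact Or.inl ⟨_, rfl, rfl⟩
  · rename_i hne
    exact Or.inr ⟨rfl, fun s hs => hne s hs⟩

/-- the normal form function -/
def nf : T3 → T3
  | .var n => .var n
  | .app c ts => red1 (.app c (ts.attach.map fun ⟨t, _⟩ => nf t))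

@[simp] lemma nf_var (n : Nat) : nf (.var n) = .var n := by simp [nf]
lemma nf_app (c : Sym3) (ts : List T3) : nf (.app c ts) = red1 (.app c (ts.map nf)) := by
  simp [nf]

lemma red1_f (s : T3) : red1 (.app f [.app g [.app h [s]]]) = .app g [s] := rfl

/-- a normal form predicate -/
def NFp (t : T3) : Prop := ∀ u, ¬ Step t u

lemma nfp_arg {c : Sym3} {ts : List T3} (h : NFp (.app c ts)) {u : T3} (hu : u ∈ ts) :
    NFp u := by
  intro w hw
  obtain ⟨i, hi⟩ := List.getElem?_of_mem hu
  exact h _ (Step.congr hi hw)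

/-- strong induction on size -/
lemma size_induction {P : T3 → Prop} (ih : ∀ t, (∀ s, size s < size t → P s) → P t) :
    ∀ t, P t := fun t =>
  (Nat.strongRecOn (size t) (fun n ihn t ht => ih t fun s hs => ihn (size s) (ht ▸ hs) s rfl)
    : ∀ t', size t' = size t → P t') t rfl

lemma nfp_single_g {x : T3} (hx : NFp x) : NFp (.app g [x]) := by
  intro u hstep
  cases hstep with
  | congr hget hstep =>
      rename_i i u' w
      cases i with
      | zero => simp only [List.getElem?_cons_zero, List.getElem?_cons_succ] at hget; cases hget; exact hx _ hstep
      | succ j => simp at hget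

lemma nfp_of_args {c : Sym3} {us : List T3} (hargs : ∀ u ∈ us, NFp u)
    (hne : ∀ s, Term.app c us ≠ .app f [.app g [.app h [s]]]) : NFp (.app c us) := by
  intro u hstep
  cases hstep with
  | root s => exact hne s rfl
  | congr hget hstep => exact hargs _ (mem_of_get? hget) _ hstep

lemma nf_normal : ∀ t, NFp (nf t) := by
  refine size_induction (fun t ih => ?_)
  match t with
  | .var n => simp only [nf_var]; intro u h; cases h
  | .app c ts =>
      rw [nf_app]
      have hargs : ∀ u ∈ ts.map nf, NFp u := by
        intro u hu
        obtain ⟨a, ha, rfl⟩ := List.mem_map.1 hu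
        exact ih a (size_lt_of_mem ha)
      rcases red1_cases (.app c (ts.map nf)) with ⟨s, heq, hred⟩ | ⟨hred, hne⟩
      · rw [hred]
        injection heq with h1 h2
        have hginst : NFp (Term.app g [.app h [s]]) :=
          hargs _ (by rw [h2]; exact List.mem_singleton.2 rfl)
        have hhs : NFp (Term.app h [s]) := nfp_arg hginst (List.mem_singleton.2 rfl)
        have hs : NFp s := nfp_arg hhs (List.mem_singleton.2 rfl)
        exact nfp_single_g hs
      · rw [hred]
        exact nfp_of_args hargs hne

lemma map_nf_of_nfp {ts : List T3} (h : ∀ a ∈ ts, nf a = a) : ts.map nf = ts := by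
  induction ts with
  | nil => rfl
  | cons a ts ih =>
      simp only [List.map_cons, List.cons.injEq]
      exact ⟨h a (by simp), ih fun b hb => h b (by simp [hb])⟩

lemma nf_of_nfp : ∀ t, NFp t → nf t = t := by
  refine size_induction (fun t ih => ?_)
  match t with
  | .var n => intro _; simp
  | .app c ts =>
      intro h
      rw [nf_app]
      have hmap : ts.map nf = ts :=
        map_nf_of_nfp fun a ha => ih a (size_lt_of_mem ha) (nfp_arg h ha)
      rw [hmap]
      rcases red1_cases (Term.app c ts) with ⟨s, heq, hred⟩ | ⟨hred, _⟩
      · rw [heq] at h; exact absurd (Step.root s) (h _)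
      · exact hred
end LM18

namespace LM18
open Sym3

lemma red1_gapp (ts : List T3) : red1 (.app g ts) = .app g ts := by
  unfold red1; split
  · rename_i heq; injection heq with h1 _; cases h1
  · rfl

lemma red1_happ (ts : List T3) : red1 (.app h ts) = .app h ts := by
  unfold red1; split
  · rename_i heq; injection heq with h1 _; cases h1
  · rfl

lemma get?_append_mid (l₁ l₂ : List T3) (u : T3) :
    (l₁ ++ u :: l₂)[l₁.length]? = some u := by
  induction l₁ with
  | nil => rfl
  | cons a l₁ ih => simpa using ih

lemma set_append_mid (l₁ l₂ : List T3) (u w : T3) :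
    (l₁ ++ u :: l₂).set l₁.length w = l₁ ++ w :: l₂ := by
  induction l₁ with
  | nil => rfl
  | cons a l₁ ih => simp [List.set, ih]

lemma set_get?_self : ∀ (l : List T3) (i : Nat) (a : T3), l[i]? = some a → l.set i a = l := by
  intro l
  induction l with
  | nil => intro i a hg; cases hg
  | cons b l ih =>
      intro i a hg
      cases i with
      | zero => simp only [List.getElem?_cons_zero, List.getElem?_cons_succ] at hg; cases hg; rfl
      | succ j => simp only [List.getElem?_cons_zero, List.getElem?_cons_succ] at hg; simp [List.set, ih j a hg]

lemma map_set_nf : ∀ (l : List T3) (i : Nat) (w : T3),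
    (l.set i w).map nf = (l.map nf).set i (nf w) := by
  intro l
  induction l with
  | nil => intro i w; rfl
  | cons a l ih =>
      intro i w
      cases i with
      | zero => rfl
      | succ j => simp [List.set, ih j w]

lemma step_nf_eq {s t : T3} (hst : Step s t) : nf s = nf t := by
  induction hst with
  | root w =>
      simp only [nf_app, List.map, red1_happ, red1_gapp, red1_f]
  | congr hget hstep ih =>
      rename_i c ts i u w
      rw [nf_app, nf_app, map_set_nf, ih.symm]
      have : (ts.map nf)[i]? = some (nf u) := by
        rw [List.getElem?_map, hget]; rfl
      rw [set_get?_self _ _ _ this]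

/-- reflexive-transitive closure of `Step` -/
abbrev SStar := Relation.ReflTransGen Step

lemma sstar_nf_eq {s t : T3} (hst : SStar s t) : nf s = nf t := by
  induction hst with
  | refl => rfl
  | tail _ h ih => exact ih.trans (step_nf_eq h)

lemma step_lift {c : Sym3} {u w : T3} (l₁ l₂ : List T3) (hst : Step u w) :
    Step (.app c (l₁ ++ u :: l₂)) (.app c (l₁ ++ w :: l₂)) := by
  have := Step.congr (c := c) (get?_append_mid l₁ l₂ u) hst
  rwa [set_append_mid] at this

lemma sstar_lift {c : Sym3} {u w : T3} (l₁ l₂ : List T3) (hst : SStar u w) :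
    SStar (.app c (l₁ ++ u :: l₂)) (.app c (l₁ ++ w :: l₂)) := by
  induction hst with
  | refl => exact Relation.ReflTransGen.refl
  | tail _ h ih => exact ih.tail (step_lift l₁ l₂ h)

lemma sstar_args {c : Sym3} : ∀ (pre ts us : List T3), List.Forall₂ SStar ts us →
    SStar (.app c (pre ++ ts)) (.app c (pre ++ us)) := by
  intro pre ts us hf
  induction hf generalizing pre with
  | nil => exact Relation.ReflTransGen.refl
  | cons hab htail ih =>
      rename_i a b ts' us'
      have h1 := sstar_lift (c := c) pre ts' hab
      have h2 := ih (pre ++ [b])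
      simp only [List.append_assoc, List.singleton_append] at h2
      exact h1.trans h2
  
lemma forall₂_nf (ts : List T3) (h : ∀ a ∈ ts, SStar a (nf a)) :
    List.Forall₂ SStar ts (ts.map nf) := by
  induction ts with
  | nil => exact List.Forall₂.nil
  | cons a ts ih =>
      exact List.Forall₂.cons (h a (by simp)) (ih fun b hb => h b (by simp [hb]))

lemma sstar_to_nf : ∀ t, SStar t (nf t) := by
  refine size_induction (fun t ih => ?_)
  match t with
  | .var n => simp only [nf_var]; exact Relation.ReflTransGen.refl
  | .app c ts =>
      have h1 : SStar (.app c ts) (.app c (ts.map nf)) := by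
        have := sstar_args (c := c) [] ts (ts.map nf)
          (forall₂_nf ts fun a ha => ih a (size_lt_of_mem ha))
        simpa using this
      rw [nf_app]
      rcases red1_cases (.app c (ts.map nf)) with ⟨s, heq, hred⟩ | ⟨hred, _⟩
      · rw [hred]
        exact h1.tail (heq ▸ Step.root s)
      · rw [hred]; exact h1

end LM18

namespace LM18
open Sym3

lemma star_iff {s t : T3} : StarRW Rr s t ↔ SStar s t :=
  ⟨fun h => Relation.ReflTransGen.mono (r := OneStep Rr) (p := Step) (fun _ _ => onestep_iff.1) _ _ h,
   fun h => Relation.ReflTransGen.mono (r := Step) (p := OneStep Rr) (fun _ _ => onestep_iff.2) _ _ h⟩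

lemma conv_nf_eq {s t : T3} (h : Conv Rr s t) : nf s = nf t := by
  induction h with
  | rel _ _ h => exact step_nf_eq (onestep_iff.1 h)
  | refl => rfl
  | symm _ _ _ ih => exact ih.symm
  | trans _ _ _ _ _ ih1 ih2 => exact ih1.trans ih2

lemma conv_gcnt {s t : T3} (h : Conv Rr s t) : gcnt s = gcnt t := by
  induction h with
  | rel _ _ h => exact (step_gcnt (onestep_iff.1 h)).symm
  | refl => rfl
  | symm _ _ _ ih => exact ih.symm
  | trans _ _ _ _ _ ih1 ih2 => exact ih1.trans ih2

lemma confluent_Rr : Confluent Rr := by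
  intro s t u hst hsu
  refine ⟨nf s, ?_, ?_⟩
  · have : nf t = nf s := (sstar_nf_eq (star_iff.1 hst)).symm
    exact star_iff.2 (this ▸ sstar_to_nf t)
  · have : nf u = nf s := (sstar_nf_eq (star_iff.1 hsu)).symm
    exact star_iff.2 (this ▸ sstar_to_nf u)

lemma terminating_Rr : Terminating Rr := by
  have hwf : WellFounded (InvImage (· < ·) size) := InvImage.wf size Nat.lt_wfRel.wf
  exact Subrelation.wf (fun h => step_size_lt (onestep_iff.1 h)) hwf

lemma normalform_iff {t : T3} : NormalForm Rr t ↔ NFp t :=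
  ⟨fun h u hs => h u (onestep_iff.2 hs), fun h u hs => h u (onestep_iff.1 hs)⟩

lemma gcnt_subterm : ∀ {u : T3} {p : List Nat} {t : T3}, SubtermAt u p t → gcnt t ≤ gcnt u := by
  intro u p t h
  induction h with
  | here => exact le_rfl
  | there hget _ ih =>
      refine ih.trans ?_
      have h1 := le_sum_of_mem (f := gcnt) (mem_of_get? hget)
      simp only [gcnt_app]
      omega

@[simp] lemma root_app (c : Sym3) (ts : List T3) : (Term.app c ts).root = some c := rfl

/-- key combinatorial lemma for non-subterm-collapsing -/
lemma nsc_main : ∀ u : T3, ∀ {p : List Nat} {t : T3}, SubtermAt u p t → p ≠ [] →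
    gcnt u = gcnt t →
    (((nf u).root = some g ∧ size (nf u) < size (nf t) ∧ (nf t).root = some g) ∨
     (((nf u).root = some f ∨ (nf u).root = some h) ∧
       (size (nf t) < size (nf u) ∨ (nf t).root = some g))) := by
  refine size_induction (fun u ih => ?_)
  intro p t hsub hp hg
  cases hsub with
  | here => exact absurd rfl hp
  | there hget hsub' =>
      rename_i c ts i u' q
      -- counting facts
      have hmem : u' ∈ ts := mem_of_get? hget
      have h1 : gcnt u' ≤ (ts.map gcnt).sum := le_sum_of_mem hmem
      have h2 : gcnt t ≤ gcnt u' := gcnt_subterm hsub'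
      have hcfh : c = f ∨ c = h := by
        cases c with
        | f => exact Or.inl rfl
        | h => exact Or.inr rfl
        | g => exfalso; simp only [gcnt_app] at hg; simp at hg; omega
      have h0 : (if c = g then 1 else 0) = 0 := by
        rcases hcfh with rfl | rfl <;> simp
      have hgu' : gcnt u' = gcnt t := by
        rw [gcnt_app, h0] at hg; omega
      have hnfmem : nf u' ∈ ts.map nf := List.mem_map_of_mem (f := nf) hmem
      have hsz : size (nf u') < size (Term.app c (ts.map nf)) := size_lt_of_mem hnfmem
      rw [nf_app]
      rcases red1_cases (.app c (ts.map nf)) with ⟨s, heq, hred⟩ | ⟨hred, hne⟩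
      · -- collapse case
        rw [hred]
        injection heq with hc hts
        obtain ⟨t0, rfl⟩ : ∃ t0, ts = [t0] := by
          cases ts with
          | nil => simp at hts
          | cons a l =>
            cases l with
            | nil => exact ⟨a, rfl⟩
            | cons b l' => simp at hts
        have hu0 : u' = t0 := by
          cases i with
          | zero => simp only [List.getElem?_cons_zero, List.getElem?_cons_succ] at hget; cases hget; rfl
          | succ j => simp at hget
        subst hu0
        have hnfu' : nf u' = Term.app g [Term.app h [s]] := by
          simp only [List.map] at hts
          exact (List.cons.injEq _ _ _ _ ▸ hts).1
        by_cases hq : q = []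
        · subst hq
          cases hsub'
          refine Or.inl ⟨rfl, ?_, ?_⟩
          · rw [hnfu']
            simp only [size_app, List.map, List.sum_cons, List.sum_nil]
            omega
          · rw [hnfu']; rfl
        · have := ih u' (size_lt_of_mem hmem) hsub' hq hgu'
          rcases this with ⟨hr1, hs1, hr2⟩ | ⟨hr1, _⟩
          · refine Or.inl ⟨rfl, ?_, hr2⟩
            rw [hnfu'] at hs1
            simp only [size_app, List.map, List.sum_cons, List.sum_nil] at hs1 ⊢
            omega
          · rw [hnfu'] at hr1
            rcases hr1 with hr1 | hr1 <;> simp at hr1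
      · -- no collapse
        rw [hred]
        have hroot : (Term.app c (ts.map nf)).root = some f ∨
            (Term.app c (ts.map nf)).root = some h := by
          rcases hcfh with rfl | rfl
          · exact Or.inl rfl
          · exact Or.inr rfl
        by_cases hq : q = []
        · subst hq
          cases hsub'
          exact Or.inr ⟨hroot, Or.inl hsz⟩
        · have := ih u' (size_lt_of_mem hmem) hsub' hq hgu'
          rcases this with ⟨_, _, hr2⟩ | ⟨_, hs1 | hr2⟩
          · exact Or.inr ⟨hroot, Or.inr hr2⟩
          · exact Or.inr ⟨hroot, Or.inl (hs1.trans hsz)⟩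
          · exact Or.inr ⟨hroot, Or.inr hr2⟩

lemma nsc_Rr : NonSubtermCollapsing Rr := by
  rintro ⟨t, u, p, hp, hsub, hconv⟩
  have hnf : nf t = nf u := conv_nf_eq hconv
  have hg : gcnt u = gcnt t := (conv_gcnt hconv).symm
  rcases nsc_main u hsub hp hg with ⟨_, hlt, _⟩ | ⟨hr, hlt | hg2⟩
  · rw [hnf] at hlt; omega
  · rw [hnf] at hlt; omega
  · rw [hnf] at hg2
    rcases hr with hr | hr <;> rw [hg2] at hr <;> simp at hr

end LM18

namespace LM18
open Sym3

lemma mem_Rr {ρ : Rule Sym3} (h : ρ ∈ Rr) : ρ = (lhs, rhs) := h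

lemma fc_Rr : FCclosed Rr := by
  intro t ⟨heps, hnnf⟩ u ⟨hstar, hnfu⟩
  -- t admits a step
  have : ∃ v, OneStep Rr t v := by
    by_contra hc
    push_neg at hc
    exact hnnf hc
  obtain ⟨v, hv⟩ := this
  have hst := onestep_iff.1 hv
  cases hst with
  | congr hget hstep =>
      rename_i c ts i u' w
      exfalso
      exact heps [i] u' (SubtermAt.there hget (SubtermAt.here u')) (by simp) w
        (onestep_iff.2 hstep)
  | root s =>
      -- t = f[g[h[s]]] with s in normal form
      have hsub : SubtermAt (Term.app f [Term.app g [Term.app h [s]]]) [0,0,0] s :=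
        SubtermAt.there rfl (SubtermAt.there rfl (SubtermAt.there rfl (SubtermAt.here s)))
      have hs : NFp s := normalform_iff.1 (heps [0,0,0] s hsub (by simp))
      have hnft : nf (Term.app f [Term.app g [Term.app h [s]]]) = Term.app g [s] := by
        simp only [nf_app, List.map, red1_happ, red1_gapp, nf_of_nfp s hs, red1_f]
      have hu : u = Term.app g [s] := by
        have h1 : nf u = nf (Term.app f [Term.app g [Term.app h [s]]]) :=
          (sstar_nf_eq (star_iff.1 hstar)).symm
        have h2 : nf u = u := nf_of_nfp u (normalform_iff.1 hnfu)
        rw [← h2, h1, hnft]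
      rw [hu]
      exact onestep_iff.2 (Step.root s)

lemma alr_Rr : AlmostLeftReduced Rr := by
  rintro ⟨l₁, r₁, l₂, r₂, p, u, σ, h1, h2, hp, hsub, hu⟩
  have e1 : l₁ = lhs := congrArg Prod.fst (mem_Rr h1)
  have e2 : l₂ = lhs := congrArg Prod.fst (mem_Rr h2)
  subst e1; subst e2
  rw [lhs_subst] at hu
  rw [lhs] at hsub
  cases hsub with
  | here => exact hp rfl
  | there hget hsub =>
      rename_i i u1 q
      cases i with
      | succ j => simp at hget
      | zero =>
          simp only [List.getElem?_cons_zero, List.getElem?_cons_succ] at hget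
          cases hget
          cases hsub with
          | here => simp at hu
          | there hget2 hsub2 =>
              rename_i i2 u2 q2
              cases i2 with
              | succ j => simp at hget2
              | zero =>
                simp only [List.getElem?_cons_zero, List.getElem?_cons_succ] at hget2
                cases hget2
                cases hsub2 with
                | here => simp at hu
                | there hget3 hsub3 =>
                    rename_i i3 u3 q3
                    cases i3 with
                    | succ j => simp at hget3
                    | zero =>
                      simp only [List.getElem?_cons_zero, List.getElem?_cons_succ] at hget3
                      cases hget3
                      cases hsub3
                      simp at hu

lemma rr_Rr : RightReduced Rr := by
  intro e he
  have := mem_Rr he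
  subst this
  refine normalform_iff.2 ?_
  have : NFp (Term.var 0) := fun u h => by cases h
  exact nfp_single_g this

lemma rhsset_Rr : RHSset Rr = Rr := by
  apply Set.eq_of_subset_of_subset
  · rintro e (he | ⟨s, t, u₀, v₀, ρ, σ, hst, huv, hρ, hmgu, hne, rfl⟩)
    · exact he
    · exfalso
      have es : s = lhs := congrArg Prod.fst (mem_Rr hst)
      have et : t = rhs := congrArg Prod.snd (mem_Rr hst)
      have eu : u₀ = lhs := congrArg Prod.fst (mem_Rr huv)
      have ev : v₀ = rhs := congrArg Prod.snd (mem_Rr huv)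
      subst es; subst et; subst eu; subst ev
      obtain ⟨k, hkinj, hk⟩ := hρ
      apply hne
      have huni := hmgu.1
      unfold Unifies at huni
      rw [rhs_subst] at huni
      have hρ0 : (Term.var 0).subst ρ = Term.var (k 0) := by rw [subst_var, hk]
      have h1 : rhs.subst ρ = Term.app g [Term.var (k 0)] := by
        rw [rhs_subst, hk]
      rw [h1, subst_app] at huni
      simp only [List.map, subst_var] at huni
      have hσ : σ 0 = σ (k 0) := by
        simpa using huni
      have h2 : lhs.subst ρ = Term.app f [Term.app g [Term.app h [Term.var (k 0)]]] := by
        rw [lhs_subst, hk]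
      rw [h2, lhs_subst]
      simp only [subst_app, List.map, subst_var, hσ]
  · exact Set.subset_union_left

lemma qd_Rr : QuasiDet (RHSset Rr) := by
  rw [rhsset_Rr]
  refine ⟨?_, ?_, ?_⟩
  · intro e he
    rw [mem_Rr he]
    exact ⟨fun h => h, fun h => h⟩
  · intro e he
    rw [mem_Rr he]
    intro h
    simp only [lhs, rhs, root_app] at h
    cases h
  · intro e₁ h₁ e₂ h₂ hne
    exact absurd ((mem_Rr h₁).trans (mem_Rr h₂).symm) hne

lemma lm_Rr : LMSystem Rr :=
  ⟨⟨confluent_Rr, terminating_Rr⟩, alr_Rr, rr_Rr, nsc_Rr, fc_Rr, qd_Rr⟩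

/-! ### The infinite congruence class of `g(y)` -/

def hpw : Nat → T3
  | 0 => .var 0
  | n + 1 => .app h [hpw n]

def fpw : Nat → T3 → T3
  | 0, t => t
  | n + 1, t => fpw n (.app f [t])

def cc (n : Nat) : T3 := fpw n (.app g [hpw n])

lemma fpw_step {s t : T3} : ∀ n, Step s t → Step (fpw n s) (fpw n t) := by
  intro n
  induction n generalizing s t with
  | zero => exact id
  | succ n ih =>
      intro hst
      have : Step (Term.app f [s]) (Term.app f [t]) := by
        have := step_lift (c := f) [] [] hst
        simpa using this
      exact ih this

lemma step_cc (n : Nat) : Step (cc (n + 1)) (cc n) := by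
  have h1 : cc (n + 1) = fpw n (.app f [.app g [.app h [hpw n]]]) := rfl
  have h2 : cc n = fpw n (.app g [hpw n]) := rfl
  rw [h1, h2]
  exact fpw_step n (Step.root (hpw n))

lemma sstar_cc (n : Nat) : SStar (cc n) (cc 0) := by
  induction n with
  | zero => exact Relation.ReflTransGen.refl
  | succ n ih => exact Relation.ReflTransGen.head (step_cc n) ih

lemma star_conv {s t : T3} (h : StarRW Rr s t) : Conv Rr s t := by
  induction h with
  | refl => exact Relation.EqvGen.refl _
  | tail _ hstep ih => exact Relation.EqvGen.trans _ _ _ ih (Relation.EqvGen.rel _ _ hstep)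

lemma conv_cc (n : Nat) : Conv Rr (cc n) (Term.app g [Term.var 0]) := by
  have : cc 0 = Term.app g [Term.var 0] := rfl
  exact this ▸ star_conv (star_iff.2 (sstar_cc n))

lemma size_fpw : ∀ n (t : T3), size (fpw n t) = n + size t := by
  intro n
  induction n with
  | zero => intro t; simp [fpw]
  | succ n ih =>
      intro t
      show size (fpw n (.app f [t])) = n + 1 + size t
      rw [ih]
      simp only [size_app, List.map, List.sum_cons, List.sum_nil]
      omega

lemma size_hpw (n : Nat) : size (hpw n) = n + 1 := by
  induction n with
  | zero => simp [hpw]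
  | succ n ih =>
      show size (.app h [hpw n]) = n + 1 + 1
      simp only [size_app, List.map, List.sum_cons, List.sum_nil, ih]
      omega

lemma size_cc (n : Nat) : size (cc n) = 2 * n + 2 := by
  show size (fpw n (.app g [hpw n])) = 2 * n + 2
  rw [size_fpw]
  simp only [size_app, List.map, List.sum_cons, List.sum_nil, size_hpw]
  omega

lemma cc_injective : Function.Injective cc := by
  intro a b hab
  have := congrArg size hab
  rw [size_cc, size_cc] at this
  omega

lemma infinite_class : { t : T3 | Conv Rr t (Term.app g [Term.var 0]) }.Infinite :=
  Set.infinite_of_injective_forall_mem cc_injective (fun n => conv_cc n)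

end LM18
open Sym3 in
/-- the single rule f(g(h(x))) → g(x) forms an LM-system whose congruence
class of g(y) is infinite; so not every LM-system has a finite equational theory. -/
theorem lm_system_infinite_class :
    ∀ (R : TRS Sym3),
      R = {(Term.app f [Term.app g [Term.app h [Term.var 0]]], Term.app g [Term.var 0])} →
    LMSystem R ∧
      { t : Term Sym3 | Conv R t (Term.app g [Term.var 0]) }.Infinite := by
  intro R hR
  subst hR
  have hRr : ({(Term.app f [Term.app g [Term.app h [Term.var 0]]], Term.app g [Term.var 0])} :
      TRS Sym3) = LM18.Rr := rfl
  rw [hRr]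
  exact ⟨LM18.lm_Rr, LM18.infinite_class⟩
end
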